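/- arXiv:1703.01543 — 3 statements merged into one kernel-verified Lean document; each statement's English description precedes it below -/
import Mathlib

section
/- Let H be a complex separable infinite-dimensional Hilbert space and let E ⊆ c₀ be a Banach symmetric sequence space with the Fatou property such that E ≠ ℓ₂. Then every surjective 2-local isometry V of the Banach symmetric ideal C_E is a (complex-)linear surjective isometry of C_E. -/
open scoped InnerProductSpace
open Filter Topology

noncomputable section

/-- The non-increasing rearrangement `x*` of a bounded real sequence:
`x*_n = inf_{|F| ≤ n} sup_{k ∉ F} |x k|`. -/
noncomputable def decRearrange (x : ℕ → ℝ) (n : ℕ) : ℝ :=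
  sInf {c : ℝ | ∃ F : Finset ℕ, F.card ≤ n ∧ ∀ k ∉ F, |x k| ≤ c}

/-- A Banach symmetric sequence space: a nonzero linear subspace of `ℓ∞` (real bounded
sequences) equipped with a complete norm such that `x* ≤ y*` pointwise and `y ∈ E` imply
`x ∈ E` with `‖x‖_E ≤ ‖y‖_E`. -/
structure BanachSymmSeqSpace where
  carrier : Set (ℕ → ℝ)
  bdd : ∀ x ∈ carrier, ∃ C : ℝ, ∀ n, |x n| ≤ C
  zero_mem : (0 : ℕ → ℝ) ∈ carrier
  add_mem : ∀ x ∈ carrier, ∀ y ∈ carrier, x + y ∈ carrier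
  smul_mem : ∀ (c : ℝ), ∀ x ∈ carrier, c • x ∈ carrier
  nontrivial : ∃ x ∈ carrier, x ≠ 0
  nrm : (ℕ → ℝ) → ℝ
  nrm_zero : nrm 0 = 0
  nrm_pos : ∀ x ∈ carrier, x ≠ 0 → 0 < nrm x
  nrm_smul : ∀ (c : ℝ), ∀ x ∈ carrier, nrm (c • x) = |c| * nrm x
  nrm_triangle : ∀ x ∈ carrier, ∀ y ∈ carrier, nrm (x + y) ≤ nrm x + nrm y
  complete : ∀ u : ℕ → ℕ → ℝ, (∀ n, u n ∈ carrier) →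
    (∀ ε : ℝ, 0 < ε → ∃ N, ∀ m ≥ N, ∀ k ≥ N, nrm (u m - u k) < ε) →
    ∃ x ∈ carrier, ∀ ε : ℝ, 0 < ε → ∃ N, ∀ m ≥ N, nrm (u m - x) < ε
  symmetric : ∀ x : ℕ → ℝ, ∀ y ∈ carrier, (∃ C : ℝ, ∀ n, |x n| ≤ C) →
    (∀ n, decRearrange x n ≤ decRearrange y n) → x ∈ carrier ∧ nrm x ≤ nrm y

/-- `E ⊆ c₀`: every element of `E` tends to zero. -/
def BanachSymmSeqSpace.SubsetC0 (S : BanachSymmSeqSpace) : Prop :=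
  ∀ x ∈ S.carrier, Filter.Tendsto x Filter.atTop (nhds 0)

/-- The Fatou property of a Banach symmetric sequence space. -/
def BanachSymmSeqSpace.Fatou (S : BanachSymmSeqSpace) : Prop :=
  ∀ a : ℕ → ℕ → ℝ, (∀ k, a k ∈ S.carrier) → (∀ k n, 0 ≤ a k n) →
    (∀ k n, a k n ≤ a (k + 1) n) → (∃ C : ℝ, ∀ k, S.nrm (a k) ≤ C) →
    ∃ b ∈ S.carrier, (∀ n, IsLUB {r : ℝ | ∃ k, r = a k n} (b n)) ∧
      IsLUB {r : ℝ | ∃ k, r = S.nrm (a k)} (S.nrm b)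

/-- `E = ℓ₂` as a set of sequences. -/
def ellTwo : Set (ℕ → ℝ) := {x : ℕ → ℝ | Summable fun n => (x n) ^ 2}

section OperatorIdeal

variable {H : Type*} [NormedAddCommGroup H] [InnerProductSpace ℂ H] [CompleteSpace H]

/-- The `n`-th singular value (approximation number) of an operator:
`s_n(x) = inf { ‖x - F‖ : rank F ≤ n }` (so `s_0(x) = ‖x‖`). For compact operators this is
the `n`-th eigenvalue (in decreasing order) of `(x*x)^{1/2}`. -/
noncomputable def singVal (x : H →L[ℂ] H) (n : ℕ) : ℝ :=
  sInf {c : ℝ | ∃ F : H →L[ℂ] H, FiniteDimensional ℂ (LinearMap.range (F : H →ₗ[ℂ] H)) ∧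
    Module.finrank ℂ (LinearMap.range (F : H →ₗ[ℂ] H)) ≤ n ∧ ‖x - F‖ = c}

/-- The Banach symmetric ideal `C_E` of compact operators whose singular value sequence
belongs to `E`. -/
def CE (S : BanachSymmSeqSpace) : Set (H →L[ℂ] H) :=
  {x | IsCompactOperator (⇑x) ∧ (fun n => singVal x n) ∈ S.carrier}

/-- The norm `‖x‖_{C_E} = ‖{s_n(x)}‖_E` of the Banach symmetric ideal `C_E`. -/
noncomputable def CEnorm (S : BanachSymmSeqSpace) (x : H →L[ℂ] H) : ℝ :=
  S.nrm (fun n => singVal x n)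

/-- A trace class operator: a compact operator with summable singular values. -/
def IsTraceClass (z : H →L[ℂ] H) : Prop :=
  IsCompactOperator (⇑z) ∧ Summable fun n => singVal z n

/-- The Köthe dual `C_E^× = { y ∈ B(H) : x y is trace class for every x ∈ C_E }`. -/
def KDual (S : BanachSymmSeqSpace) : Set (H →L[ℂ] H) :=
  {y : H →L[ℂ] H | ∀ x ∈ CE (H := H) S, IsTraceClass (x * y)}

/-- The trace of an operator computed with respect to a Hilbert basis `b`:
`tr z = Σ_i ⟪b i, z (b i)⟫` (basis independent for trace class operators). -/
noncomputable def traceB (b : HilbertBasis ℕ ℂ H) (z : H →L[ℂ] H) : ℂ :=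
  ∑' i, ⟪b i, z (b i)⟫_ℂ

/-- The weak topology `σ(C_E, C_E^×)` on `C_E`, generated by the functionals
`x ↦ tr (x y)`, `y ∈ C_E^×`. -/
noncomputable def sigmaTop (S : BanachSymmSeqSpace) (b : HilbertBasis ℕ ℂ H) :
    TopologicalSpace {x : H →L[ℂ] H // x ∈ CE (H := H) S} :=
  ⨅ y : {y : H →L[ℂ] H // y ∈ KDual (H := H) S},
    TopologicalSpace.induced (fun x => traceB b (x.1 * y.1)) inferInstance

/-- The ball topology `b_{C_E}`: the coarsest topology in which every closed norm ball
of `(C_E, ‖·‖_{C_E})` is closed. -/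
noncomputable def ballTop (S : BanachSymmSeqSpace) :
    TopologicalSpace {x : H →L[ℂ] H // x ∈ CE (H := H) S} :=
  TopologicalSpace.generateFrom
    {s | ∃ (c : {x : H →L[ℂ] H // x ∈ CE (H := H) S}) (ε : ℝ), 0 < ε ∧
      s = {y : {x : H →L[ℂ] H // x ∈ CE (H := H) S} | CEnorm S (y.1 - c.1) ≤ ε}ᶜ}

/-- `W` is a surjective (complex-)linear isometry of the Banach symmetric ideal `C_E`. -/
def SurjLinearIsomOn (S : BanachSymmSeqSpace) (W : (H →L[ℂ] H) → (H →L[ℂ] H)) : Prop :=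
  (∀ x ∈ CE (H := H) S, W x ∈ CE (H := H) S) ∧
  (∀ y ∈ CE (H := H) S, ∃ x ∈ CE (H := H) S, W x = y) ∧
  (∀ x ∈ CE (H := H) S, ∀ y ∈ CE (H := H) S, W (x + y) = W x + W y) ∧
  (∀ (c : ℂ), ∀ x ∈ CE (H := H) S, W (c • x) = c • W x) ∧
  (∀ x ∈ CE (H := H) S, CEnorm S (W x) = CEnorm S x)

end OperatorIdeal

end

set_option linter.unusedSectionVars false

namespace TwoLocalAux

open Module

variable {H : Type*} [NormedAddCommGroup H] [InnerProductSpace ℂ H] [CompleteSpace H]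

/-- The defining set of `singVal`. -/
def svSet (x : H →L[ℂ] H) (n : ℕ) : Set ℝ :=
  {c : ℝ | ∃ F : H →L[ℂ] H, FiniteDimensional ℂ (LinearMap.range (F : H →ₗ[ℂ] H)) ∧
    Module.finrank ℂ (LinearMap.range (F : H →ₗ[ℂ] H)) ≤ n ∧ ‖x - F‖ = c}

lemma singVal_def (x : H →L[ℂ] H) (n : ℕ) : singVal x n = sInf (svSet x n) := rfl

lemma range_zero_clm : LinearMap.range ((0 : H →L[ℂ] H) : H →ₗ[ℂ] H) = ⊥ := by
  ext v; simp [LinearMap.mem_range, eq_comm]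

lemma zero_adm (n : ℕ) : FiniteDimensional ℂ (LinearMap.range ((0 : H →L[ℂ] H) : H →ₗ[ℂ] H)) ∧
    Module.finrank ℂ (LinearMap.range ((0 : H →L[ℂ] H) : H →ₗ[ℂ] H)) ≤ n := by
  rw [range_zero_clm]
  exact ⟨inferInstance, by simp⟩

lemma svSet_nonempty (x : H →L[ℂ] H) (n : ℕ) : (svSet x n).Nonempty :=
  ⟨‖x - 0‖, 0, (zero_adm n).1, (zero_adm n).2, rfl⟩

lemma svSet_lb (x : H →L[ℂ] H) (n : ℕ) : ∀ c ∈ svSet x n, 0 ≤ c := by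
  rintro c ⟨F, -, -, rfl⟩; exact norm_nonneg _

lemma svSet_bddBelow (x : H →L[ℂ] H) (n : ℕ) : BddBelow (svSet x n) :=
  ⟨0, svSet_lb x n⟩

lemma singVal_nonneg (x : H →L[ℂ] H) (n : ℕ) : 0 ≤ singVal x n :=
  le_csInf (svSet_nonempty x n) (svSet_lb x n)

lemma singVal_le_of (x F : H →L[ℂ] H) (n : ℕ)
    (h1 : FiniteDimensional ℂ (LinearMap.range (F : H →ₗ[ℂ] H)))
    (h2 : Module.finrank ℂ (LinearMap.range (F : H →ₗ[ℂ] H)) ≤ n) :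
    singVal x n ≤ ‖x - F‖ :=
  csInf_le (svSet_bddBelow x n) ⟨F, h1, h2, rfl⟩

lemma singVal_lt_add (x : H →L[ℂ] H) (n : ℕ) {ε : ℝ} (hε : 0 < ε) :
    ∃ F : H →L[ℂ] H, FiniteDimensional ℂ (LinearMap.range (F : H →ₗ[ℂ] H)) ∧
      Module.finrank ℂ (LinearMap.range (F : H →ₗ[ℂ] H)) ≤ n ∧ ‖x - F‖ < singVal x n + ε := by
  obtain ⟨c, hc, hlt⟩ := exists_lt_of_csInf_lt (svSet_nonempty x n)
    (lt_add_of_pos_right (singVal x n) hε)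
  obtain ⟨F, h1, h2, rfl⟩ := hc
  exact ⟨F, h1, h2, hlt⟩

lemma singVal_antitone (x : H →L[ℂ] H) {m n : ℕ} (h : m ≤ n) :
    singVal x n ≤ singVal x m := by
  apply csInf_le_csInf (svSet_bddBelow x n) (svSet_nonempty x m)
  rintro c ⟨F, h1, h2, rfl⟩
  exact ⟨F, h1, h2.trans h, rfl⟩

lemma singVal_zero_op (n : ℕ) : singVal (0 : H →L[ℂ] H) n = 0 := by
  refine le_antisymm ?_ (singVal_nonneg _ n)
  have := singVal_le_of (0 : H →L[ℂ] H) 0 n (zero_adm n).1 (zero_adm n).2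
  simpa using this

lemma singVal_zero (x : H →L[ℂ] H) : singVal x 0 = ‖x‖ := by
  have h1 : svSet x 0 = {‖x‖} := by
    ext c
    constructor
    · rintro ⟨F, h1, h2, rfl⟩
      have : LinearMap.range (F : H →ₗ[ℂ] H) = ⊥ := by
        haveI := h1
        exact Submodule.finrank_eq_zero.mp (Nat.le_zero.mp h2)
      have hF : F = 0 := by
        ext v
        have hv : (F : H →ₗ[ℂ] H) v ∈ LinearMap.range (F : H →ₗ[ℂ] H) := LinearMap.mem_range_self _ v
        rw [‹LinearMap.range (F : H →ₗ[ℂ] H) = ⊥›] at hv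
        simpa using hv
      simp [hF]
    · rintro rfl
      exact ⟨0, (zero_adm 0).1, (zero_adm 0).2, by simp⟩
  rw [singVal_def, h1, csInf_singleton]

end TwoLocalAux
namespace TwoLocalAux

variable {H : Type*} [NormedAddCommGroup H] [InnerProductSpace ℂ H] [CompleteSpace H]

lemma range_smul_le (c : ℂ) (F : H →L[ℂ] H) :
    LinearMap.range ((c • F : H →L[ℂ] H) : H →ₗ[ℂ] H) ≤ LinearMap.range (F : H →ₗ[ℂ] H) := by
  rintro v ⟨u, rfl⟩
  exact ⟨c • u, by simp [map_smul, smul_comm]⟩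

lemma singVal_smul_le (c : ℂ) (x : H →L[ℂ] H) (n : ℕ) :
    singVal (c • x) n ≤ ‖c‖ * singVal x n := by
  refine le_of_forall_pos_le_add fun ε hε => ?_
  have hd : (0 : ℝ) < ε / (‖c‖ + 1) := by positivity
  obtain ⟨F, h1, h2, h3⟩ := singVal_lt_add x n hd
  haveI := h1
  haveI : FiniteDimensional ℂ (LinearMap.range ((c • F : H →L[ℂ] H) : H →ₗ[ℂ] H)) :=
    Submodule.finiteDimensional_of_le (range_smul_le c F)
  have hr : Module.finrank ℂ (LinearMap.range ((c • F : H →L[ℂ] H) : H →ₗ[ℂ] H)) ≤ n :=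
    le_trans (Submodule.finrank_mono (range_smul_le c F)) h2
  have h4 : singVal (c • x) n ≤ ‖c • x - c • F‖ := singVal_le_of _ _ n this hr
  have h5 : ‖c • x - c • F‖ = ‖c‖ * ‖x - F‖ := by
    rw [← smul_sub, norm_smul]
  have h6 : ‖c‖ * ‖x - F‖ ≤ ‖c‖ * (singVal x n + ε / (‖c‖ + 1)) :=
    mul_le_mul_of_nonneg_left h3.le (norm_nonneg c)
  have h7 : ‖c‖ * (ε / (‖c‖ + 1)) ≤ ε := by
    rw [mul_div_assoc']
    rw [div_le_iff₀ (by positivity)]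
    nlinarith [norm_nonneg c, hε.le]
  calc singVal (c • x) n ≤ ‖c‖ * ‖x - F‖ := by rw [← h5]; exact h4
    _ ≤ ‖c‖ * singVal x n + ‖c‖ * (ε / (‖c‖ + 1)) := by rw [mul_add] at h6; exact h6
    _ ≤ ‖c‖ * singVal x n + ε := by linarith

lemma singVal_smul (c : ℂ) (x : H →L[ℂ] H) (n : ℕ) :
    singVal (c • x) n = ‖c‖ * singVal x n := by
  rcases eq_or_ne c 0 with rfl | hc
  · simp [singVal_zero_op]
  refine le_antisymm (singVal_smul_le c x n) ?_
  have h := singVal_smul_le c⁻¹ (c • x) n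
  rw [smul_smul, inv_mul_cancel₀ hc, one_smul, norm_inv] at h
  have hcpos : (0 : ℝ) < ‖c‖ := norm_pos_iff.mpr hc
  calc ‖c‖ * singVal x n ≤ ‖c‖ * (‖c‖⁻¹ * singVal (c • x) n) :=
        mul_le_mul_of_nonneg_left h hcpos.le
    _ = singVal (c • x) n := by
        field_simp

lemma singVal_neg (x : H →L[ℂ] H) (n : ℕ) : singVal (-x) n = singVal x n := by
  have := singVal_smul (-1) x n
  simpa using this

lemma singVal_add_le (x y : H →L[ℂ] H) (m n : ℕ) :
    singVal (x + y) (m + n) ≤ singVal x m + singVal y n := by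
  refine le_of_forall_pos_le_add fun ε hε => ?_
  have hε2 : (0 : ℝ) < ε / 2 := by positivity
  obtain ⟨F, hF1, hF2, hF3⟩ := singVal_lt_add x m hε2
  obtain ⟨G, hG1, hG2, hG3⟩ := singVal_lt_add y n hε2
  haveI := hF1; haveI := hG1
  have hle : LinearMap.range ((F + G : H →L[ℂ] H) : H →ₗ[ℂ] H) ≤
      LinearMap.range (F : H →ₗ[ℂ] H) ⊔ LinearMap.range (G : H →ₗ[ℂ] H) := by
    rintro v ⟨u, rfl⟩
    exact Submodule.add_mem_sup (LinearMap.mem_range_self _ u) (LinearMap.mem_range_self _ u)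
  haveI : FiniteDimensional ℂ (LinearMap.range ((F + G : H →L[ℂ] H) : H →ₗ[ℂ] H)) :=
    Submodule.finiteDimensional_of_le hle
  have hr : Module.finrank ℂ (LinearMap.range ((F + G : H →L[ℂ] H) : H →ₗ[ℂ] H)) ≤ m + n := by
    have h1 := Submodule.finrank_mono (R := ℂ) hle
    have h2 := Submodule.finrank_sup_add_finrank_inf_eq (LinearMap.range (F : H →ₗ[ℂ] H))
      (LinearMap.range (G : H →ₗ[ℂ] H))
    omega
  have h4 : singVal (x + y) (m + n) ≤ ‖(x + y) - (F + G)‖ := singVal_le_of _ _ _ this hr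
  have h5 : (x + y) - (F + G) = (x - F) + (y - G) := by abel
  have h6 : ‖(x + y) - (F + G)‖ ≤ ‖x - F‖ + ‖y - G‖ := by rw [h5]; exact norm_add_le _ _
  linarith

lemma singVal_le_norm (x : H →L[ℂ] H) (n : ℕ) : singVal x n ≤ ‖x‖ := by
  rw [← singVal_zero x]
  exact singVal_antitone x (Nat.zero_le n)

end TwoLocalAux
namespace TwoLocalAux

/-- The defining set of `decRearrange`. -/
def drSet (x : ℕ → ℝ) (n : ℕ) : Set ℝ :=
  {c : ℝ | ∃ F : Finset ℕ, F.card ≤ n ∧ ∀ k ∉ F, |x k| ≤ c}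

lemma decRearrange_def (x : ℕ → ℝ) (n : ℕ) : decRearrange x n = sInf (drSet x n) := rfl

lemma drSet_lb (x : ℕ → ℝ) (n : ℕ) : ∀ c ∈ drSet x n, 0 ≤ c := by
  rintro c ⟨F, -, hF⟩
  obtain ⟨k, hk⟩ := F.exists_notMem
  exact le_trans (abs_nonneg _) (hF k hk)

lemma drSet_bddBelow (x : ℕ → ℝ) (n : ℕ) : BddBelow (drSet x n) :=
  ⟨0, drSet_lb x n⟩

lemma decRearrange_antitone_eq {a : ℕ → ℝ} (ha : ∀ i j, i ≤ j → a j ≤ a i)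
    (h0 : ∀ i, 0 ≤ a i) (n : ℕ) : decRearrange a n = a n := by
  have hmem : a n ∈ drSet a n := by
    refine ⟨Finset.range n, by simp, fun k hk => ?_⟩
    rw [Finset.mem_range, not_lt] at hk
    rw [abs_of_nonneg (h0 k)]
    exact ha n k hk
  have hlb : ∀ c ∈ drSet a n, a n ≤ c := by
    rintro c ⟨F, hcard, hF⟩
    have : ∃ k ∈ Finset.range (n + 1), k ∉ F := by
      by_contra hcon
      push_neg at hcon
      have : Finset.range (n + 1) ⊆ F := fun k hk => hcon k hk
      have := Finset.card_le_card this
      simp at this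
      omega
    obtain ⟨k, hk1, hk2⟩ := this
    rw [Finset.mem_range] at hk1
    calc a n ≤ a k := ha k n (by omega)
      _ ≤ |a k| := le_abs_self _
      _ ≤ c := hF k hk2
  exact le_antisymm (csInf_le ⟨a n, hlb⟩ hmem) (le_csInf ⟨a n, hmem⟩ hlb)

/-- Interleaving: the sequence supported on `{k : k % 2 = r}` with values `a (k/2)`. -/
def interleave (r : ℕ) (a : ℕ → ℝ) (k : ℕ) : ℝ := if k % 2 = r then a (k / 2) else 0

lemma decRearrange_interleave_le {a : ℕ → ℝ} (ha : ∀ i j, i ≤ j → a j ≤ a i)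
    (h0 : ∀ i, 0 ≤ a i) (r : ℕ) (hr : r < 2) (n : ℕ) :
    decRearrange (interleave r a) n ≤ a n := by
  have hmem : a n ∈ drSet (interleave r a) n := by
    refine ⟨(Finset.range n).image (fun j => 2 * j + r), ?_, fun k hk => ?_⟩
    · exact le_trans Finset.card_image_le (by simp)
    · unfold interleave
      by_cases hmod : k % 2 = r
      · simp only [hmod, if_true]
        have hkform : k = 2 * (k / 2) + r := by omega
        have : k / 2 ∉ Finset.range n := by
          intro hmem'
          exact hk (Finset.mem_image.mpr ⟨k / 2, hmem', hkform.symm⟩)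
        rw [Finset.mem_range, not_lt] at this
        rw [abs_of_nonneg (h0 _)]
        exact ha n (k / 2) this
      · simp only [hmod, if_false]
        rw [abs_zero]
        exact h0 n
  exact csInf_le (drSet_bddBelow _ n) hmem

lemma interleave_mem {S : BanachSymmSeqSpace} {a : ℕ → ℝ} (haS : a ∈ S.carrier)
    (ha : ∀ i j, i ≤ j → a j ≤ a i) (h0 : ∀ i, 0 ≤ a i) (r : ℕ) (hr : r < 2) :
    interleave r a ∈ S.carrier ∧ S.nrm (interleave r a) ≤ S.nrm a := by
  apply S.symmetric _ a haS
  · refine ⟨a 0, fun n => ?_⟩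
    unfold interleave
    by_cases hmod : n % 2 = r
    · simp only [hmod, if_true]
      rw [abs_of_nonneg (h0 _)]
      exact ha 0 _ (Nat.zero_le _)
    · simp only [hmod, if_false, abs_zero]
      exact h0 0
  · intro n
    rw [decRearrange_antitone_eq ha h0 n]
    exact decRearrange_interleave_le ha h0 r hr n

lemma half_seq_eq (a : ℕ → ℝ) : (fun n => a (n / 2)) = interleave 0 a + interleave 1 a := by
  funext k
  unfold interleave
  rcases Nat.mod_two_eq_zero_or_one k with h | h <;> simp [h]

lemma half_seq_mem {S : BanachSymmSeqSpace} {a : ℕ → ℝ} (haS : a ∈ S.carrier)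
    (ha : ∀ i j, i ≤ j → a j ≤ a i) (h0 : ∀ i, 0 ≤ a i) :
    (fun n => a (n / 2)) ∈ S.carrier ∧ S.nrm (fun n => a (n / 2)) ≤ 2 * S.nrm a := by
  obtain ⟨m0, n0⟩ := interleave_mem haS ha h0 0 (by norm_num)
  obtain ⟨m1, n1⟩ := interleave_mem haS ha h0 1 (by norm_num)
  constructor
  · rw [half_seq_eq]
    exact S.add_mem _ m0 _ m1
  · rw [half_seq_eq]
    calc S.nrm (interleave 0 a + interleave 1 a) ≤ S.nrm (interleave 0 a) + S.nrm (interleave 1 a) :=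
          S.nrm_triangle _ m0 _ m1
      _ ≤ 2 * S.nrm a := by linarith

lemma nrm_nonneg {S : BanachSymmSeqSpace} {a : ℕ → ℝ} (haS : a ∈ S.carrier) : 0 ≤ S.nrm a := by
  have hneg : (-1 : ℝ) • a ∈ S.carrier := S.smul_mem (-1) a haS
  have h1 : S.nrm ((-1 : ℝ) • a) = S.nrm a := by
    rw [S.nrm_smul (-1) a haS]; simp
  have h2 : a + (-1 : ℝ) • a = 0 := by funext n; simp
  have h3 := S.nrm_triangle a haS _ hneg
  rw [h2, S.nrm_zero, h1] at h3
  linarith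

end TwoLocalAux
namespace TwoLocalAux

variable {H : Type*} [NormedAddCommGroup H] [InnerProductSpace ℂ H] [CompleteSpace H]

lemma singVal_anti (x : H →L[ℂ] H) : ∀ i j, i ≤ j → singVal x j ≤ singVal x i :=
  fun _ _ h => singVal_antitone x h

lemma zero_mem_CE (S : BanachSymmSeqSpace) : (0 : H →L[ℂ] H) ∈ CE (H := H) S := by
  constructor
  · have : IsCompactOperator (fun _ : H => (0 : H)) := isCompactOperator_zero
    exact this
  · have : (fun n => singVal (0 : H →L[ℂ] H) n) = (0 : ℕ → ℝ) := by
      funext n; exact singVal_zero_op n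
    rw [this]
    exact S.zero_mem

lemma smul_mem_CE (S : BanachSymmSeqSpace) (c : ℂ) {x : H →L[ℂ] H}
    (hx : x ∈ CE (H := H) S) : c • x ∈ CE (H := H) S := by
  refine ⟨?_, ?_⟩
  · have : IsCompactOperator (c • (⇑x)) := hx.1.smul c
    simpa using this
  · have heq : (fun n => singVal (c • x) n) = (‖c‖ : ℝ) • (fun n => singVal x n) := by
      funext n; simp [singVal_smul, Pi.smul_apply, smul_eq_mul]
    rw [heq]
    exact S.smul_mem _ _ hx.2

lemma CEnorm_smul (S : BanachSymmSeqSpace) (c : ℂ) {x : H →L[ℂ] H}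
    (hx : x ∈ CE (H := H) S) : CEnorm S (c • x) = ‖c‖ * CEnorm S x := by
  unfold CEnorm
  have heq : (fun n => singVal (c • x) n) = (‖c‖ : ℝ) • (fun n => singVal x n) := by
    funext n; simp [singVal_smul, Pi.smul_apply, smul_eq_mul]
  rw [heq, S.nrm_smul _ _ hx.2, abs_of_nonneg (norm_nonneg c)]

lemma add_mem_CE' (S : BanachSymmSeqSpace) {x y : H →L[ℂ] H}
    (hx : x ∈ CE (H := H) S) (hy : y ∈ CE (H := H) S) :
    (x + y) ∈ CE (H := H) S ∧ CEnorm S (x + y) ≤ 2 * (CEnorm S x + CEnorm S y) := by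
  have hcomp : IsCompactOperator (⇑(x + y)) := by
    have : IsCompactOperator (⇑x + ⇑y) := hx.1.add hy.1
    simpa using this
  -- the dominating sequence
  set b : ℕ → ℝ := (fun n => singVal x (n / 2)) + (fun n => singVal y (n / 2)) with hb
  obtain ⟨hbx, hnx⟩ := half_seq_mem (S := S) hx.2 (singVal_anti x) (singVal_nonneg x)
  obtain ⟨hby, hny⟩ := half_seq_mem (S := S) hy.2 (singVal_anti y) (singVal_nonneg y)
  have hbmem : b ∈ S.carrier := S.add_mem _ hbx _ hby
  have hbanti : ∀ i j, i ≤ j → b j ≤ b i := by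
    intro i j hij
    have h2 : i / 2 ≤ j / 2 := Nat.div_le_div_right hij
    exact add_le_add (singVal_antitone x h2) (singVal_antitone y h2)
  have hb0 : ∀ i, 0 ≤ b i := fun i => add_nonneg (singVal_nonneg _ _) (singVal_nonneg _ _)
  have hdom : ∀ n, singVal (x + y) n ≤ b n := by
    intro n
    have hsplit : n / 2 + (n - n / 2) = n := by omega
    have h1 : singVal (x + y) n ≤ singVal x (n / 2) + singVal y (n - n / 2) := by
      calc singVal (x + y) n = singVal (x + y) (n / 2 + (n - n / 2)) := by rw [hsplit]
        _ ≤ _ := singVal_add_le x y _ _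
    have h2 : singVal y (n - n / 2) ≤ singVal y (n / 2) := singVal_antitone y (by omega)
    simp only [hb, Pi.add_apply]
    linarith
  have hsym := S.symmetric (fun n => singVal (x + y) n) b hbmem
    ⟨‖x + y‖, fun n => by
      rw [abs_of_nonneg (singVal_nonneg _ _)]; exact singVal_le_norm _ n⟩
    (by
      intro n
      rw [decRearrange_antitone_eq (singVal_anti (x + y)) (singVal_nonneg (x + y)) n,
        decRearrange_antitone_eq hbanti hb0 n]
      exact hdom n)
  refine ⟨⟨hcomp, hsym.1⟩, ?_⟩
  calc CEnorm S (x + y) ≤ S.nrm b := hsym.2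
    _ ≤ S.nrm (fun n => singVal x (n / 2)) + S.nrm (fun n => singVal y (n / 2)) :=
        S.nrm_triangle _ hbx _ hby
    _ ≤ 2 * (CEnorm S x + CEnorm S y) := by unfold CEnorm; linarith

lemma add_mem_CE (S : BanachSymmSeqSpace) {x y : H →L[ℂ] H}
    (hx : x ∈ CE (H := H) S) (hy : y ∈ CE (H := H) S) : (x + y) ∈ CE (H := H) S :=
  (add_mem_CE' S hx hy).1

lemma CEnorm_quasi (S : BanachSymmSeqSpace) {x y : H →L[ℂ] H}
    (hx : x ∈ CE (H := H) S) (hy : y ∈ CE (H := H) S) :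
    CEnorm S (x + y) ≤ 2 * (CEnorm S x + CEnorm S y) :=
  (add_mem_CE' S hx hy).2

lemma CEnorm_nonneg (S : BanachSymmSeqSpace) {x : H →L[ℂ] H}
    (hx : x ∈ CE (H := H) S) : 0 ≤ CEnorm S x :=
  nrm_nonneg hx.2

lemma CEnorm_neg (S : BanachSymmSeqSpace) (x : H →L[ℂ] H) : CEnorm S (-x) = CEnorm S x := by
  unfold CEnorm
  congr 1
  funext n
  exact singVal_neg x n

lemma CEnorm_eq_zero (S : BanachSymmSeqSpace) {x : H →L[ℂ] H}
    (hx : x ∈ CE (H := H) S) (h : CEnorm S x = 0) : x = 0 := by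
  by_contra hne
  have hsne : (fun n => singVal x n) ≠ 0 := by
    intro hcon
    have h0 : singVal x 0 = 0 := by
      have := congrFun hcon 0
      simpa using this
    rw [singVal_zero] at h0
    exact hne (norm_eq_zero.mp h0)
  have := S.nrm_pos _ hx.2 hsne
  unfold CEnorm at h
  linarith

/-- `CE S` as a complex submodule of `B(H)`. -/
def CEsub (S : BanachSymmSeqSpace) : Submodule ℂ (H →L[ℂ] H) where
  carrier := CE (H := H) S
  add_mem' := fun hx hy => add_mem_CE S hx hy
  zero_mem' := zero_mem_CE S
  smul_mem' := fun c _ hx => smul_mem_CE S c hx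

end TwoLocalAux
namespace TwoLocalAux

variable {H : Type*} [NormedAddCommGroup H] [InnerProductSpace ℂ H] [CompleteSpace H]

variable (S : BanachSymmSeqSpace)

/-- The subtype `C_E` as a module. -/
abbrev XS := ↥(CEsub (H := H) S)

/-- The distance on `C_E`. -/
noncomputable def D (a b : XS (H := H) S) : ℝ := CEnorm S ((a : H →L[ℂ] H) - (b : H →L[ℂ] H))

variable {S}

lemma memCE (a : XS (H := H) S) : (a : H →L[ℂ] H) ∈ CE (H := H) S := a.2

lemma subCE (a b : XS (H := H) S) : (a : H →L[ℂ] H) - b ∈ CE (H := H) S := by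
  have := (a - b).2
  exact this

lemma D_nonneg (a b : XS (H := H) S) : 0 ≤ D S a b := CEnorm_nonneg S (subCE a b)

lemma D_symm (a b : XS (H := H) S) : D S a b = D S b a := by
  unfold D
  rw [← neg_sub (b : H →L[ℂ] H) a, CEnorm_neg]

lemma D_eq_zero {a b : XS (H := H) S} (h : D S a b = 0) : a = b := by
  have := CEnorm_eq_zero S (subCE a b) h
  exact Subtype.coe_injective (sub_eq_zero.mp this)

lemma D_quasi (a b c : XS (H := H) S) : D S a c ≤ 2 * (D S a b + D S b c) := by
  unfold D
  have heq : (a : H →L[ℂ] H) - c = ((a : H →L[ℂ] H) - b) + ((b : H →L[ℂ] H) - c) := by abel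
  rw [heq]
  exact CEnorm_quasi S (subCE a b) (subCE b c)

/-- Isometry property for a bijection of `C_E`. -/
def IsIsom (f : XS (H := H) S ≃ XS (H := H) S) : Prop :=
  ∀ a b, D S (f a) (f b) = D S a b

lemma IsIsom.symm {f : XS (H := H) S ≃ XS (H := H) S} (hf : IsIsom f) : IsIsom f.symm := by
  intro a b
  have := hf (f.symm a) (f.symm b)
  simpa using this.symm

/-- Reflection through `z`. -/
noncomputable def reflz (z : XS (H := H) S) : XS (H := H) S ≃ XS (H := H) S where
  toFun u := (2 : ℂ) • z - u
  invFun u := (2 : ℂ) • z - u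
  left_inv u := by simp
  right_inv u := by simp

lemma reflz_isom (z : XS (H := H) S) : IsIsom (reflz z) := by
  intro a b
  unfold D reflz
  simp only [Equiv.coe_fn_mk]
  have heq : (((2 : ℂ) • z - a : XS (H := H) S) : H →L[ℂ] H) - ((2 : ℂ) • z - b : XS (H := H) S) =
      -(((a : H →L[ℂ] H)) - b) := by
    push_cast
    abel
  rw [heq, CEnorm_neg]

lemma reflz_self (z : XS (H := H) S) : reflz z z = z := by
  unfold reflz
  simp only [Equiv.coe_fn_mk]
  rw [two_smul]
  abel

lemma reflz_dist (z u : XS (H := H) S) : D S (reflz z u) u = 2 * D S z u := by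
  unfold D reflz
  simp only [Equiv.coe_fn_mk]
  have heq : (((2 : ℂ) • z - u : XS (H := H) S) : H →L[ℂ] H) - u =
      (2 : ℂ) • ((z : H →L[ℂ] H) - u) := by
    push_cast
    rw [smul_sub, two_smul, two_smul]
    abel
  rw [heq, CEnorm_smul S _ (subCE z u)]
  norm_num

/-- Midpoint. -/
noncomputable def mid (a b : XS (H := H) S) : XS (H := H) S := (2⁻¹ : ℂ) • (a + b)

lemma two_smul_mid (a b : XS (H := H) S) : (2 : ℂ) • mid a b = a + b := by
  unfold mid
  rw [smul_smul]
  norm_num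

lemma reflz_mid_left (a b : XS (H := H) S) : reflz (mid a b) a = b := by
  show (2 : ℂ) • mid a b - a = b
  rw [two_smul_mid]
  abel

lemma reflz_mid_right (a b : XS (H := H) S) : reflz (mid a b) b = a := by
  show (2 : ℂ) • mid a b - b = a
  rw [two_smul_mid]
  abel

lemma stab_bound (a b : XS (H := H) S) :
    ∀ n : ℕ, ∀ g : XS (H := H) S ≃ XS (H := H) S, IsIsom g → g a = a → g b = b →
      D S (g (mid a b)) (mid a b) ≤ 4 * D S (mid a b) a / 2 ^ n := by
  set z := mid a b with hz
  intro n
  induction n with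
  | zero =>
    intro g hg ha hb
    have h1 : D S (g z) z ≤ 2 * (D S (g z) a + D S a z) := D_quasi _ _ _
    have h2 : D S (g z) a = D S z a := by
      conv_lhs => rw [← ha]
      exact hg z a
    rw [h2, D_symm a z] at h1
    simpa using h1.trans_eq (by ring)
  | succ n ih =>
    intro g hg ha hb
    -- the composite `e ∘ g⁻¹ ∘ e ∘ g`
    set e := reflz z with he
    have hea : e a = b := by rw [he, hz]; exact reflz_mid_left a b
    have heb : e b = a := by rw [he, hz]; exact reflz_mid_right a b
    have hez : e z = z := by rw [he]; exact reflz_self z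
    have hsa : g.symm a = a := by rw [Equiv.symm_apply_eq]; exact ha.symm
    have hsb : g.symm b = b := by rw [Equiv.symm_apply_eq]; exact hb.symm
    set comp := g.trans (e.trans (g.symm.trans e)) with hcomp
    have hcompeq : ∀ u, comp u = e (g.symm (e (g u))) := fun u => rfl
    have he_isom : IsIsom e := by rw [he]; exact reflz_isom z
    have hcomp_isom : IsIsom comp := by
      intro u v
      rw [hcompeq, hcompeq]
      rw [he_isom, hg.symm, he_isom, hg]
    have hcompa : comp a = a := by
      rw [hcompeq, ha, hea, hsb, heb]
    have hcompb : comp b = b := by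
      rw [hcompeq, hb, heb, hsa, hea]
    have hkey : D S (comp z) z = 2 * D S (g z) z := by
      calc D S (comp z) z = D S (e (g.symm (e (g z)))) (e z) := by rw [hcompeq, hez]
        _ = D S (g.symm (e (g z))) z := by rw [he_isom]
        _ = D S (g.symm (e (g z))) (g.symm (g z)) := by rw [Equiv.symm_apply_apply]
        _ = D S (e (g z)) (g z) := hg.symm _ _
        _ = 2 * D S z (g z) := by rw [he]; exact reflz_dist z (g z)
        _ = 2 * D S (g z) z := by rw [D_symm]
    have hih := ih comp hcomp_isom hcompa hcompb
    rw [hkey] at hih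
    have h2 : (0:ℝ) < 2 ^ n := by positivity
    rw [pow_succ, ← div_div]
    linarith

lemma stab_fix (a b : XS (H := H) S) (g : XS (H := H) S ≃ XS (H := H) S)
    (hg : IsIsom g) (ha : g a = a) (hb : g b = b) : g (mid a b) = mid a b := by
  have hbd := stab_bound a b
  have hD0 : D S (g (mid a b)) (mid a b) = 0 := by
    by_contra hne
    have hpos : 0 < D S (g (mid a b)) (mid a b) :=
      lt_of_le_of_ne (D_nonneg _ _) (Ne.symm hne)
    obtain ⟨n, hn⟩ := pow_unbounded_of_one_lt
      (4 * D S (mid a b) a / D S (g (mid a b)) (mid a b)) (one_lt_two (α := ℝ))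
    have h1 := hbd n g hg ha hb
    have hp : (0:ℝ) < 2 ^ n := by positivity
    rw [div_lt_iff₀ hpos] at hn
    have h1' : D S (g (mid a b)) (mid a b) * 2 ^ n ≤ 4 * D S (mid a b) a := by
      calc D S (g (mid a b)) (mid a b) * 2 ^ n
          ≤ (4 * D S (mid a b) a / 2 ^ n) * 2 ^ n := by nlinarith
        _ = 4 * D S (mid a b) a := div_mul_cancel₀ _ hp.ne'
    nlinarith
  exact D_eq_zero hD0

lemma mu_midpoint (f : XS (H := H) S ≃ XS (H := H) S) (hf : IsIsom f)
    (a b : XS (H := H) S) : f (mid a b) = mid (f a) (f b) := by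
  set z := mid a b with hz
  set z' := mid (f a) (f b) with hz'
  set e' := reflz z' with he'
  set g := f.trans (e'.trans f.symm) with hg
  have hgeq : ∀ u, g u = f.symm (e' (f u)) := fun u => rfl
  have hg_isom : IsIsom g := by
    intro u v
    rw [hgeq, hgeq, hf.symm, reflz_isom z', hf]
  have hga : g a = b := by
    rw [hgeq, he', hz', reflz_mid_left, Equiv.symm_apply_apply]
  have hgb : g b = a := by
    rw [hgeq, he', hz', reflz_mid_right, Equiv.symm_apply_apply]
  set e := reflz z with he
  set h := g.trans e with hh
  have hheq : ∀ u, h u = e (g u) := fun u => rfl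
  have hh_isom : IsIsom h := by
    intro u v
    rw [hheq, hheq, reflz_isom z, hg_isom]
  have hha : h a = a := by rw [hheq, hga, he, hz, reflz_mid_right]
  have hhb : h b = b := by rw [hheq, hgb, he, hz, reflz_mid_left]
  have hfix := stab_fix a b h hh_isom hha hhb
  rw [← hz] at hfix
  rw [hheq] at hfix
  -- e (g z) = z, and e z = z, e is an involution
  have hgz : g z = z := by
    have : e (e (g z)) = e z := by rw [hfix]
    rw [he, reflz_self] at this
    rwa [show (reflz z) ((reflz z) (g z)) = g z from (reflz z).left_inv (g z)] at this
  rw [hgeq] at hgz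
  have h1 : e' (f z) = f z := by
    have := congrArg f hgz
    rwa [Equiv.apply_symm_apply] at this
  -- e' (f z) = f z means 2 z' - f z = f z, hence z' = f z
  have h2 : (2 : ℂ) • z' - f z = f z := h1
  have h3 : (2 : ℂ) • z' = (2 : ℂ) • f z := by
    have h4 : (2 : ℂ) • z' = f z + f z := sub_eq_iff_eq_add.mp h2
    rw [h4, two_smul]
  have h5 : z' = f z := smul_right_injective _ (two_ne_zero) h3
  exact h5.symm

end TwoLocalAux

namespace TwoLocalAux

variable {H : Type*} [NormedAddCommGroup H] [InnerProductSpace ℂ H] [CompleteSpace H]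

lemma sub_mem_CE (S : BanachSymmSeqSpace) {x y : H →L[ℂ] H}
    (hx : x ∈ CE (H := H) S) (hy : y ∈ CE (H := H) S) : x - y ∈ CE (H := H) S :=
  (CEsub (H := H) S).sub_mem hx hy

lemma CEnorm_zero (S : BanachSymmSeqSpace) : CEnorm S (0 : H →L[ℂ] H) = 0 := by
  unfold CEnorm
  have : (fun n => singVal (0 : H →L[ℂ] H) n) = (0 : ℕ → ℝ) := by
    funext n; exact singVal_zero_op n
  rw [this, S.nrm_zero]

end TwoLocalAux


open TwoLocalAux

/-- Every surjective 2-local isometry `V` of a perfect Banach symmetric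
ideal `C_E ≠ C_2` is a (complex-)linear surjective isometry of `C_E`. -/
theorem two_local_isometry_is_linear
    {H : Type*} [NormedAddCommGroup H] [InnerProductSpace ℂ H] [CompleteSpace H]
    [TopologicalSpace.SeparableSpace H] (hinf : ¬ FiniteDimensional ℂ H)
    (S : BanachSymmSeqSpace) (hc0 : S.SubsetC0) (hF : S.Fatou)
    (hne : S.carrier ≠ ellTwo)
    (V : (H →L[ℂ] H) → (H →L[ℂ] H))
    (hVsurj : ∀ y ∈ CE (H := H) S, ∃ x ∈ CE (H := H) S, V x = y)
    (h2loc : ∀ x ∈ CE (H := H) S, ∀ y ∈ CE (H := H) S,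
      ∃ W : (H →L[ℂ] H) → (H →L[ℂ] H), SurjLinearIsomOn S W ∧ V x = W x ∧ V y = W y) :
    SurjLinearIsomOn S V := by
  classical
  have hmap : ∀ x ∈ CE (H := H) S, V x ∈ CE (H := H) S := by
    intro x hx
    obtain ⟨W, hW, hVx, -⟩ := h2loc x hx x hx
    rw [hVx]; exact hW.1 x hx
  have hiso : ∀ x ∈ CE (H := H) S, CEnorm S (V x) = CEnorm S x := by
    intro x hx
    obtain ⟨W, hW, hVx, -⟩ := h2loc x hx x hx
    rw [hVx]; exact hW.2.2.2.2 x hx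
  have hsmul : ∀ (c : ℂ), ∀ x ∈ CE (H := H) S, V (c • x) = c • V x := by
    intro c x hx
    have hcx : c • x ∈ CE (H := H) S := smul_mem_CE S c hx
    obtain ⟨W, hW, hVx, hVcx⟩ := h2loc x hx (c • x) hcx
    rw [hVcx, hW.2.2.2.1 c x hx, hVx]
  have hWsub : ∀ (W : (H →L[ℂ] H) → (H →L[ℂ] H)), SurjLinearIsomOn S W →
      ∀ x ∈ CE (H := H) S, ∀ y ∈ CE (H := H) S, W (x - y) = W x - W y := by
    intro W hW x hx y hy
    have h1 : x - y = x + (-1 : ℂ) • y := by rw [neg_one_smul, ← sub_eq_add_neg]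
    rw [h1, hW.2.2.1 x hx _ (smul_mem_CE S (-1) hy), hW.2.2.2.1 (-1) y hy, neg_one_smul,
      ← sub_eq_add_neg]
  have hdiff : ∀ x ∈ CE (H := H) S, ∀ y ∈ CE (H := H) S,
      CEnorm S (V x - V y) = CEnorm S (x - y) := by
    intro x hx y hy
    obtain ⟨W, hW, hVx, hVy⟩ := h2loc x hx y hy
    rw [hVx, hVy, ← hWsub W hW x hx y hy]
    exact hW.2.2.2.2 _ (sub_mem_CE S hx hy)
  have hinj : ∀ x ∈ CE (H := H) S, ∀ y ∈ CE (H := H) S, V x = V y → x = y := by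
    intro x hx y hy h
    have h1 : CEnorm S (x - y) = 0 := by
      rw [← hdiff x hx y hy, h, sub_self, CEnorm_zero]
    exact sub_eq_zero.mp (CEnorm_eq_zero S (sub_mem_CE S hx hy) h1)
  -- the induced bijection of the subtype `C_E`
  let Vb : XS (H := H) S → XS (H := H) S := fun a => ⟨V a.1, hmap a.1 a.2⟩
  have hbij : Function.Bijective Vb := by
    constructor
    · intro a b h
      exact Subtype.coe_injective (hinj a.1 a.2 b.1 b.2 (congrArg Subtype.val h))
    · intro b
      obtain ⟨x, hx, hVx⟩ := hVsurj b.1 b.2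
      exact ⟨⟨x, hx⟩, Subtype.ext hVx⟩
  let Vbar : XS (H := H) S ≃ XS (H := H) S := Equiv.ofBijective Vb hbij
  have hVbar_isom : IsIsom Vbar := by
    intro a b
    show CEnorm S (V a.1 - V b.1) = CEnorm S ((a.1 : H →L[ℂ] H) - b.1)
    exact hdiff a.1 a.2 b.1 b.2
  have hadd : ∀ x ∈ CE (H := H) S, ∀ y ∈ CE (H := H) S, V (x + y) = V x + V y := by
    intro x hx y hy
    have hmu := mu_midpoint Vbar hVbar_isom ⟨x, hx⟩ ⟨y, hy⟩
    have hmu' : V ((2⁻¹ : ℂ) • (x + y)) = (2⁻¹ : ℂ) • (V x + V y) :=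
      congrArg Subtype.val hmu
    have hmem : (2⁻¹ : ℂ) • (x + y) ∈ CE (H := H) S :=
      smul_mem_CE S _ (add_mem_CE S hx hy)
    calc V (x + y) = V ((2 : ℂ) • ((2⁻¹ : ℂ) • (x + y))) := by
          rw [smul_smul, (by norm_num : (2 : ℂ) * 2⁻¹ = 1), one_smul]
      _ = (2 : ℂ) • V ((2⁻¹ : ℂ) • (x + y)) := hsmul 2 _ hmem
      _ = (2 : ℂ) • ((2⁻¹ : ℂ) • (V x + V y)) := by rw [hmu']
      _ = V x + V y := by rw [smul_smul, (by norm_num : (2 : ℂ) * 2⁻¹ = 1), one_smul]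
  exact ⟨hmap, hVsurj, hadd, hsmul, hiso⟩
end

section
/- Let H be a complex separable infinite-dimensional Hilbert space and let E ⊆ c₀ be a Banach symmetric sequence space with the Fatou property. Then every closed norm ball of the Banach symmetric ideal C_E is closed in the weak topology σ(C_E, C_E^×); consequently the ball topology b_{C_E} is coarser than σ(C_E, C_E^×). -/
open scoped InnerProductSpace
open Filter Topology

section AuxSeq

open Filter Topology

lemma decSet_nonneg {x : ℕ → ℝ} {n : ℕ} {c : ℝ}
    (hc : c ∈ {c : ℝ | ∃ F : Finset ℕ, F.card ≤ n ∧ ∀ k ∉ F, |x k| ≤ c}) : 0 ≤ c := by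
  obtain ⟨F, -, hF⟩ := hc
  obtain ⟨k, hk⟩ := F.exists_notMem
  exact le_trans (abs_nonneg _) (hF k hk)

lemma decSet_bddBelow (x : ℕ → ℝ) (n : ℕ) :
    BddBelow {c : ℝ | ∃ F : Finset ℕ, F.card ≤ n ∧ ∀ k ∉ F, |x k| ≤ c} :=
  ⟨0, fun _ hc => decSet_nonneg hc⟩

lemma decSet_nonempty {x : ℕ → ℝ} (hb : ∃ C, ∀ k, |x k| ≤ C) (n : ℕ) :
    Set.Nonempty {c : ℝ | ∃ F : Finset ℕ, F.card ≤ n ∧ ∀ k ∉ F, |x k| ≤ c} := by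
  obtain ⟨C, hC⟩ := hb
  exact ⟨C, ∅, by simp, fun k _ => hC k⟩

lemma decRearrange_nonneg {x : ℕ → ℝ} (hb : ∃ C, ∀ k, |x k| ≤ C) (n : ℕ) :
    0 ≤ decRearrange x n :=
  le_csInf (decSet_nonempty hb n) fun _ hc => decSet_nonneg hc

lemma decRearrange_le {x : ℕ → ℝ} {n : ℕ} {c : ℝ}
    (hc : ∃ F : Finset ℕ, F.card ≤ n ∧ ∀ k ∉ F, |x k| ≤ c) :
    decRearrange x n ≤ c :=
  csInf_le (decSet_bddBelow x n) hc

lemma decRearrange_eq_self {x : ℕ → ℝ} (h0 : ∀ n, 0 ≤ x n)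
    (hm : ∀ ⦃i j : ℕ⦄, i ≤ j → x j ≤ x i) (n : ℕ) : decRearrange x n = x n := by
  refine le_antisymm (decRearrange_le ⟨Finset.range n, by simp, fun k hk => ?_⟩) ?_
  · rw [abs_of_nonneg (h0 k)]
    exact hm (by simpa using hk)
  · refine le_csInf (decSet_nonempty ⟨x 0, fun k => by
      rw [abs_of_nonneg (h0 k)]; exact hm (Nat.zero_le k)⟩ n) ?_
    rintro c ⟨F, hcard, hF⟩
    have hns : ¬ (Finset.range (n+1) ⊆ F) := by
      intro h
      have := Finset.card_le_card h
      simp only [Finset.card_range] at this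
      omega
    obtain ⟨k, hk1, hk2⟩ := Finset.not_subset.1 hns
    calc x n ≤ x k := hm (Nat.lt_succ_iff.mp (Finset.mem_range.mp hk1))
    _ ≤ |x k| := le_abs_self _
    _ ≤ c := hF k hk2

/-- domination for nonneg non-increasing sequences -/
lemma mem_of_dominated (S : BanachSymmSeqSpace) {x y : ℕ → ℝ}
    (hy : y ∈ S.carrier) (hx0 : ∀ n, 0 ≤ x n) (hxm : ∀ ⦃i j : ℕ⦄, i ≤ j → x j ≤ x i)
    (hy0 : ∀ n, 0 ≤ y n) (hym : ∀ ⦃i j : ℕ⦄, i ≤ j → y j ≤ y i)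
    (hle : ∀ n, x n ≤ y n) : x ∈ S.carrier ∧ S.nrm x ≤ S.nrm y := by
  refine S.symmetric x y hy ⟨x 0, fun n => by
    rw [abs_of_nonneg (hx0 n)]; exact hxm (Nat.zero_le n)⟩ ?_
  intro n
  rw [decRearrange_eq_self hx0 hxm n, decRearrange_eq_self hy0 hym n]
  exact hle n

lemma single_mem (S : BanachSymmSeqSpace) (j : ℕ) :
    (fun n => if n = j then (1:ℝ) else 0) ∈ S.carrier := by
  obtain ⟨x₀, hx₀, hx₀0⟩ := S.nontrivial
  obtain ⟨j₀, hj₀⟩ : ∃ m, x₀ m ≠ 0 := by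
    by_contra h; push_neg at h; exact hx₀0 (funext h)
  have hbdd := S.bdd x₀ hx₀
  set d : ℝ := decRearrange x₀ 0 with hd
  have hdlb : |x₀ j₀| ≤ d := by
    refine le_csInf (decSet_nonempty hbdd 0) ?_
    rintro c ⟨F, hcard, hF⟩
    have hFe : F = ∅ := Finset.card_eq_zero.mp (Nat.le_zero.mp hcard)
    exact hF j₀ (by simp [hFe])
  have hdpos : 0 < d := lt_of_lt_of_le (abs_pos.mpr hj₀) hdlb
  have hmem : (fun n => if n = j then d else 0) ∈ S.carrier := by
    refine (S.symmetric _ x₀ hx₀ ⟨d, fun n => ?_⟩ fun n => ?_).1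
    · by_cases h : n = j <;> simp [h, abs_of_nonneg hdpos.le, hdpos.le]
    · match n with
      | 0 =>
        refine le_trans (decRearrange_le ⟨∅, by simp, fun m _ => ?_⟩) le_rfl
        by_cases h : m = j <;> simp [h, abs_of_nonneg hdpos.le, hdpos.le, ← hd]
      | (n+1) =>
        refine le_trans (decRearrange_le ⟨{j}, by simp, fun m hm => ?_⟩)
          (decRearrange_nonneg hbdd (n+1))
        simp only [Finset.mem_singleton] at hm
        simp [hm]
  have := S.smul_mem d⁻¹ _ hmem
  have heq : d⁻¹ • (fun n => if n = j then d else 0) = fun n => if n = j then (1:ℝ) else 0 := by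
    funext n
    by_cases h : n = j <;>
      simp [h, Pi.smul_apply, smul_eq_mul, inv_mul_cancel₀ hdpos.ne']
  rwa [heq] at this

lemma indicator_mem (S : BanachSymmSeqSpace) (k : ℕ) :
    (fun n => if n < k then (1:ℝ) else 0) ∈ S.carrier := by
  induction k with
  | zero => simpa using (show (fun _ : ℕ => (0:ℝ)) ∈ S.carrier from S.zero_mem)
  | succ k ih =>
    have := S.add_mem _ ih _ (single_mem S k)
    have heq : ((fun n => if n < k then (1:ℝ) else 0) + fun n => if n = k then (1:ℝ) else 0)
        = fun n => if n < k + 1 then (1:ℝ) else 0 := by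
      funext n
      simp only [Pi.add_apply]
      rcases lt_trichotomy n k with h | h | h
      · simp [h, Nat.lt_succ_of_lt h, Nat.ne_of_lt h]
      · simp [h, Nat.lt_irrefl]
      · have h1 : ¬ n < k := by omega
        have h2 : n ≠ k := by omega
        have h3 : ¬ n < k + 1 := by omega
        simp [h1, h2, h3]
    rwa [heq] at this

lemma nrm_nonneg (S : BanachSymmSeqSpace) {x : ℕ → ℝ} (hx : x ∈ S.carrier) : 0 ≤ S.nrm x := by
  by_cases h : x = 0
  · rw [h, S.nrm_zero]
  · exact (S.nrm_pos x hx h).le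

end AuxSeq

set_option linter.unusedSectionVars false

section AuxSingVal

variable {H : Type*} [NormedAddCommGroup H] [InnerProductSpace ℂ H] [CompleteSpace H]

/-- The defining set of `singVal`. -/
def svSet (x : H →L[ℂ] H) (n : ℕ) : Set ℝ :=
  {c : ℝ | ∃ F : H →L[ℂ] H, FiniteDimensional ℂ (LinearMap.range (F : H →ₗ[ℂ] H)) ∧
    Module.finrank ℂ (LinearMap.range (F : H →ₗ[ℂ] H)) ≤ n ∧ ‖x - F‖ = c}

lemma singVal_eq_sInf (x : H →L[ℂ] H) (n : ℕ) : singVal x n = sInf (svSet x n) := rfl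

lemma range_zero_clm : LinearMap.range ((0 : H →L[ℂ] H) : H →ₗ[ℂ] H) = ⊥ := by
  ext y
  simp [LinearMap.mem_range, eq_comm]

lemma norm_mem_svSet (x : H →L[ℂ] H) (n : ℕ) : ‖x‖ ∈ svSet x n := by
  refine ⟨0, ?_, ?_, by simp⟩
  · rw [range_zero_clm]; infer_instance
  · rw [range_zero_clm]; simp

lemma svSet_nonempty (x : H →L[ℂ] H) (n : ℕ) : (svSet x n).Nonempty :=
  ⟨‖x‖, norm_mem_svSet x n⟩

lemma svSet_nonneg {x : H →L[ℂ] H} {n : ℕ} {c : ℝ} (hc : c ∈ svSet x n) : 0 ≤ c := by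
  obtain ⟨F, -, -, rfl⟩ := hc; exact norm_nonneg _

lemma svSet_bddBelow (x : H →L[ℂ] H) (n : ℕ) : BddBelow (svSet x n) :=
  ⟨0, fun _ hc => svSet_nonneg hc⟩

lemma singVal_nonneg (x : H →L[ℂ] H) (n : ℕ) : 0 ≤ singVal x n :=
  le_csInf (svSet_nonempty x n) fun _ hc => svSet_nonneg hc

lemma singVal_le {x : H →L[ℂ] H} {n : ℕ} (F : H →L[ℂ] H)
    (h1 : FiniteDimensional ℂ (LinearMap.range (F : H →ₗ[ℂ] H)))
    (h2 : Module.finrank ℂ (LinearMap.range (F : H →ₗ[ℂ] H)) ≤ n) : singVal x n ≤ ‖x - F‖ :=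
  csInf_le (svSet_bddBelow x n) ⟨F, h1, h2, rfl⟩

lemma singVal_le_norm (x : H →L[ℂ] H) (n : ℕ) : singVal x n ≤ ‖x‖ :=
  csInf_le (svSet_bddBelow x n) (norm_mem_svSet x n)

lemma singVal_antitone (x : H →L[ℂ] H) {m n : ℕ} (h : m ≤ n) : singVal x n ≤ singVal x m := by
  refine csInf_le_csInf (svSet_bddBelow x n) (svSet_nonempty x m) ?_
  rintro c ⟨F, h1, h2, rfl⟩
  exact ⟨F, h1, le_trans h2 h, rfl⟩

lemma singVal_weyl (x y : H →L[ℂ] H) (n : ℕ) : singVal x n ≤ singVal y n + ‖x - y‖ := by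
  rw [← sub_le_iff_le_add]
  refine le_csInf (svSet_nonempty y n) ?_
  rintro c ⟨F, h1, h2, rfl⟩
  rw [sub_le_iff_le_add]
  calc singVal x n ≤ ‖x - F‖ := singVal_le F h1 h2
  _ = ‖(x - y) + (y - F)‖ := by rw [sub_add_sub_cancel]
  _ ≤ ‖x - y‖ + ‖y - F‖ := norm_add_le _ _
  _ = ‖y - F‖ + ‖x - y‖ := by ring

lemma singVal_comp_le (a p x : H →L[ℂ] H) (ha : ‖a‖ ≤ 1) (hp : ‖p‖ ≤ 1) (n : ℕ) :
    singVal (a.comp (x.comp p)) n ≤ singVal x n := by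
  refine le_csInf (svSet_nonempty x n) ?_
  rintro c ⟨F, h1, h2, rfl⟩
  have hle : LinearMap.range (a.comp (F.comp p) : H →ₗ[ℂ] H) ≤ (LinearMap.range (F : H →ₗ[ℂ] H)).map (a : H →ₗ[ℂ] H) := by
    rintro y ⟨h, rfl⟩
    exact ⟨F (p h), ⟨p h, rfl⟩, rfl⟩
  haveI hfd : FiniteDimensional ℂ ((LinearMap.range (F : H →ₗ[ℂ] H)).map (a : H →ₗ[ℂ] H)) := by
    exact Module.Finite.map _ _
  haveI : FiniteDimensional ℂ (LinearMap.range (a.comp (F.comp p) : H →ₗ[ℂ] H)) :=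
    Submodule.finiteDimensional_of_le hle
  have hrk : Module.finrank ℂ (LinearMap.range (a.comp (F.comp p) : H →ₗ[ℂ] H)) ≤ n := by
    refine le_trans (Submodule.finrank_mono hle) (le_trans ?_ h2)
    exact Submodule.finrank_map_le _ _
  calc singVal (a.comp (x.comp p)) n ≤ ‖a.comp (x.comp p) - a.comp (F.comp p)‖ :=
        singVal_le _ ‹_› hrk
  _ = ‖a.comp ((x - F).comp p)‖ := by
        rw [← ContinuousLinearMap.comp_sub, ← ContinuousLinearMap.sub_comp]
  _ ≤ ‖a‖ * ‖(x - F).comp p‖ := ContinuousLinearMap.opNorm_comp_le _ _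
  _ ≤ 1 * (‖x - F‖ * ‖p‖) := by
        refine mul_le_mul ha (ContinuousLinearMap.opNorm_comp_le _ _) (norm_nonneg _) one_pos.le
  _ ≤ 1 * (‖x - F‖ * 1) := by
        refine mul_le_mul_of_nonneg_left (mul_le_mul_of_nonneg_left hp (norm_nonneg _)) one_pos.le
  _ = ‖x - F‖ := by ring

lemma singVal_add_le (x y : H →L[ℂ] H) (m n : ℕ) :
    singVal (x + y) (m + n) ≤ singVal x m + singVal y n := by
  refine le_of_forall_pos_le_add fun ε hε => ?_
  obtain ⟨cx, ⟨F, hF1, hF2, rfl⟩, hcx⟩ :=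
    exists_lt_of_csInf_lt (svSet_nonempty x m) (lt_add_of_pos_right (singVal x m) (half_pos hε))
  obtain ⟨cy, ⟨G, hG1, hG2, rfl⟩, hcy⟩ :=
    exists_lt_of_csInf_lt (svSet_nonempty y n) (lt_add_of_pos_right (singVal y n) (half_pos hε))
  have hle : LinearMap.range (F + G : H →ₗ[ℂ] H) ≤ LinearMap.range (F : H →ₗ[ℂ] H) ⊔ LinearMap.range (G : H →ₗ[ℂ] H) := by
    rintro v ⟨h, rfl⟩
    exact Submodule.add_mem_sup ⟨h, rfl⟩ ⟨h, rfl⟩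
  haveI : FiniteDimensional ℂ (LinearMap.range (F + G : H →ₗ[ℂ] H)) :=
    Submodule.finiteDimensional_of_le hle
  have hrk : Module.finrank ℂ (LinearMap.range (F + G : H →ₗ[ℂ] H)) ≤ m + n := by
    refine le_trans (Submodule.finrank_mono hle) ?_
    exact le_trans (Submodule.finrank_add_le_finrank_add_finrank _ _) (add_le_add hF2 hG2)
  calc singVal (x + y) (m + n) ≤ ‖(x + y) - (F + G)‖ := singVal_le _ ‹_› hrk
  _ = ‖(x - F) + (y - G)‖ := by rw [add_sub_add_comm]
  _ ≤ ‖x - F‖ + ‖y - G‖ := norm_add_le _ _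
  _ ≤ (singVal x m + ε/2) + (singVal y n + ε/2) := add_le_add hcx.le hcy.le
  _ = singVal x m + singVal y n + ε := by ring

lemma range_neg_clm (F : H →L[ℂ] H) : LinearMap.range (-F : H →ₗ[ℂ] H) = LinearMap.range (F : H →ₗ[ℂ] H) := by
  ext y
  constructor
  · rintro ⟨h, rfl⟩; exact ⟨-h, by simp⟩
  · rintro ⟨h, rfl⟩; exact ⟨-h, by simp⟩

lemma singVal_neg_le (x : H →L[ℂ] H) (n : ℕ) : singVal (-x) n ≤ singVal x n := by
  refine le_csInf (svSet_nonempty x n) ?_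
  rintro c ⟨F, h1, h2, rfl⟩
  haveI : FiniteDimensional ℂ (LinearMap.range (-F : H →ₗ[ℂ] H)) := by rwa [range_neg_clm]
  have hrk : Module.finrank ℂ (LinearMap.range (-F : H →ₗ[ℂ] H)) ≤ n := by rwa [range_neg_clm]
  calc singVal (-x) n ≤ ‖(-x) - (-F)‖ := singVal_le _ ‹_› hrk
  _ = ‖F - x‖ := by rw [neg_sub_neg]
  _ = ‖x - F‖ := norm_sub_rev _ _

lemma singVal_neg (x : H →L[ℂ] H) (n : ℕ) : singVal (-x) n = singVal x n :=
  le_antisymm (singVal_neg_le x n) (by simpa using singVal_neg_le (-x) n)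

lemma singVal_abs_bounded (x : H →L[ℂ] H) : ∃ C, ∀ n, |singVal x n| ≤ C :=
  ⟨‖x‖, fun n => by
    rw [abs_of_nonneg (singVal_nonneg x n)]; exact singVal_le_norm x n⟩

end AuxSingVal

section AuxDiff

variable {H : Type*} [NormedAddCommGroup H] [InnerProductSpace ℂ H] [CompleteSpace H]

lemma diff_singVal_mem (S : BanachSymmSeqSpace) {x c : H →L[ℂ] H}
    (hx : (fun n => singVal x n) ∈ S.carrier) (hc : (fun n => singVal c n) ∈ S.carrier) :
    (fun n => singVal (x - c) n) ∈ S.carrier := by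
  set hfun : ℕ → ℝ := fun n => singVal x n + singVal c n with hfun_def
  have hmem : hfun ∈ S.carrier := S.add_mem _ hx _ hc
  have h0 : ∀ n, 0 ≤ hfun n := fun n => add_nonneg (singVal_nonneg x n) (singVal_nonneg c n)
  have hmono : ∀ ⦃i j : ℕ⦄, i ≤ j → hfun j ≤ hfun i := fun i j hij =>
    add_le_add (singVal_antitone x hij) (singVal_antitone c hij)
  have hbddh : ∃ C, ∀ n, |hfun n| ≤ C :=
    ⟨hfun 0, fun n => by rw [abs_of_nonneg (h0 n)]; exact hmono (Nat.zero_le n)⟩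
  -- the even and odd spread sequences
  set v : ℕ → ℝ := fun n => if Even n then hfun (n / 2) else 0 with hv_def
  set w : ℕ → ℝ := fun n => if Even n then 0 else hfun (n / 2) with hw_def
  obtain ⟨C, hC⟩ := hbddh
  have hCnn : (0:ℝ) ≤ C := le_trans (abs_nonneg _) (hC 0)
  have hvb : ∃ C, ∀ n, |v n| ≤ C := by
    refine ⟨C, fun n => ?_⟩
    by_cases h : Even n
    · simp only [hv_def, h, if_true]; exact hC _
    · simp only [hv_def, h, if_false, abs_zero]; exact hCnn
  have hwb : ∃ C, ∀ n, |w n| ≤ C := by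
    refine ⟨C, fun n => ?_⟩
    by_cases h : Even n
    · simp only [hw_def, h, if_true, abs_zero]; exact hCnn
    · simp only [hw_def, h, if_false]; exact hC _
  have hdech : ∀ n, decRearrange hfun n = hfun n := decRearrange_eq_self h0 hmono
  have hvmem : v ∈ S.carrier := by
    refine (S.symmetric v hfun hmem hvb fun n => ?_).1
    rw [hdech n]
    refine decRearrange_le ⟨(Finset.range n).image (fun i => 2*i), ?_, fun k hk => ?_⟩
    · exact le_trans Finset.card_image_le (by simp)
    · by_cases h : Even k
      · obtain ⟨l, rfl⟩ := h
        have hl : ¬ l < n := by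
          intro hln
          exact hk (Finset.mem_image.mpr ⟨l, Finset.mem_range.mpr hln, by omega⟩)
        have : (l + l) / 2 = l := by omega
        simp only [hv_def, Even.add_self, if_true, this]
        rw [abs_of_nonneg (h0 l)]
        exact hmono (by omega)
      · simp [hv_def, h, h0 n]
  have hwmem : w ∈ S.carrier := by
    refine (S.symmetric w hfun hmem hwb fun n => ?_).1
    rw [hdech n]
    refine decRearrange_le ⟨(Finset.range n).image (fun i => 2*i + 1), ?_, fun k hk => ?_⟩
    · exact le_trans Finset.card_image_le (by simp)
    · by_cases h : Even k
      · simp [hw_def, h, h0 n]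
      · have hk2 : k % 2 = 1 := Nat.not_even_iff.mp h
        obtain ⟨l, hl⟩ : ∃ l, k = 2*l + 1 := ⟨k/2, by omega⟩
        have hln : ¬ l < n := by
          intro hln
          exact hk (Finset.mem_image.mpr ⟨l, Finset.mem_range.mpr hln, hl.symm⟩)
        have hkodd : ¬ Even k := h
        have : k / 2 = l := by omega
        simp only [hw_def, hkodd, if_false, this]
        rw [abs_of_nonneg (h0 l)]
        exact hmono (by omega)
  set σ : ℕ → ℝ := fun n => hfun (n / 2) with hσ_def
  have hσmem : σ ∈ S.carrier := by
    have := S.add_mem _ hvmem _ hwmem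
    have heq : v + w = σ := by
      funext n
      by_cases h : Even n <;> simp [hv_def, hw_def, hσ_def, Pi.add_apply, h]
    rwa [heq] at this
  have hσ0 : ∀ n, 0 ≤ σ n := fun n => h0 _
  have hσmono : ∀ ⦃i j : ℕ⦄, i ≤ j → σ j ≤ σ i := fun i j hij =>
    hmono (Nat.div_le_div_right hij)
  have hsle : ∀ n, singVal (x - c) n ≤ σ n := by
    intro n
    have h1 : singVal (x - c) n ≤ singVal (x - c) (n/2 + n/2) :=
      singVal_antitone _ (by omega)
    have h2 : singVal (x - c) (n/2 + n/2) ≤ singVal x (n/2) + singVal (-c) (n/2) := by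
      rw [sub_eq_add_neg]
      exact singVal_add_le x (-c) (n/2) (n/2)
    rw [singVal_neg] at h2
    exact le_trans h1 h2
  refine (S.symmetric _ σ hσmem (singVal_abs_bounded (x - c)) fun n => ?_).1
  rw [decRearrange_eq_self (singVal_nonneg (x - c)) (fun i j hij => singVal_antitone _ hij) n,
    decRearrange_eq_self hσ0 hσmono n]
  exact hsle n

end AuxDiff

section AuxProj

open Filter Topology
open scoped InnerProductSpace

variable {H : Type*} [NormedAddCommGroup H] [InnerProductSpace ℂ H] [CompleteSpace H]

/-- Partial-sum projection onto the span of the first `m` basis vectors. -/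
noncomputable def proj (b : HilbertBasis ℕ ℂ H) (m : ℕ) : H →L[ℂ] H :=
  ∑ j ∈ Finset.range m, (innerSL ℂ (b j)).smulRight (b j)

lemma proj_apply (b : HilbertBasis ℕ ℂ H) (m : ℕ) (h : H) :
    proj b m h = ∑ j ∈ Finset.range m, (⟪b j, h⟫_ℂ) • b j := by
  simp [proj, ContinuousLinearMap.sum_apply, ContinuousLinearMap.smulRight_apply]

lemma norm_proj_apply_sq (b : HilbertBasis ℕ ℂ H) (m : ℕ) (h : H) :
    ‖proj b m h‖^2 = ∑ j ∈ Finset.range m, ‖⟪b j, h⟫_ℂ‖^2 := by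
  have e1 : (⟪proj b m h, proj b m h⟫_ℂ)
      = ∑ j ∈ Finset.range m, (starRingEnd ℂ) (⟪b j, h⟫_ℂ) * ⟪b j, h⟫_ℂ := by
    rw [proj_apply]
    exact b.orthonormal.inner_sum _ _ _
  rw [← inner_self_eq_norm_sq (𝕜 := ℂ), e1, map_sum]
  refine Finset.sum_congr rfl fun j _ => ?_
  rw [mul_comm, RCLike.mul_conj]
  norm_cast

lemma norm_proj_apply_le (b : HilbertBasis ℕ ℂ H) (m : ℕ) (h : H) :
    ‖proj b m h‖ ≤ ‖h‖ := by
  have h1 : ‖proj b m h‖^2 ≤ ‖h‖^2 := by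
    rw [norm_proj_apply_sq]
    exact b.orthonormal.sum_inner_products_le h
  have := Real.sqrt_le_sqrt h1
  rwa [Real.sqrt_sq (norm_nonneg _), Real.sqrt_sq (norm_nonneg _)] at this

lemma norm_proj_op_le (b : HilbertBasis ℕ ℂ H) (m : ℕ) : ‖proj b m‖ ≤ 1 :=
  ContinuousLinearMap.opNorm_le_bound _ one_pos.le fun h => by
    rw [one_mul]; exact norm_proj_apply_le b m h

lemma re_inner_proj_self (b : HilbertBasis ℕ ℂ H) (m : ℕ) (h : H) :
    RCLike.re (⟪h, proj b m h⟫_ℂ) = ∑ j ∈ Finset.range m, ‖⟪b j, h⟫_ℂ‖^2 := by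
  have e1 : (⟪h, proj b m h⟫_ℂ) = ∑ j ∈ Finset.range m,
      ((⟪b j, h⟫_ℂ) * (starRingEnd ℂ) (⟪b j, h⟫_ℂ)) := by
    rw [proj_apply, inner_sum]
    refine Finset.sum_congr rfl fun j _ => ?_
    rw [inner_smul_right, inner_conj_symm]
  rw [e1, map_sum]
  refine Finset.sum_congr rfl fun j _ => ?_
  rw [RCLike.mul_conj]
  norm_cast

lemma norm_sub_proj_apply_le (b : HilbertBasis ℕ ℂ H) (m : ℕ) (h : H) :
    ‖h - proj b m h‖ ≤ ‖h‖ := by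
  have h1 : ‖h - proj b m h‖^2 ≤ ‖h‖^2 := by
    rw [norm_sub_sq (𝕜 := ℂ), re_inner_proj_self, ← norm_proj_apply_sq]
    nlinarith [sq_nonneg (‖proj b m h‖)]
  have := Real.sqrt_le_sqrt h1
  rwa [Real.sqrt_sq (norm_nonneg _), Real.sqrt_sq (norm_nonneg _)] at this

lemma proj_adjoint (b : HilbertBasis ℕ ℂ H) (m : ℕ) :
    ContinuousLinearMap.adjoint (proj b m) = proj b m := by
  refine ((ContinuousLinearMap.eq_adjoint_iff _ _).mpr ?_).symm
  intro u v
  rw [proj_apply, proj_apply, sum_inner, inner_sum]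
  refine Finset.sum_congr rfl fun j _ => ?_
  rw [inner_smul_left, inner_smul_right, inner_conj_symm]
  ring

lemma tendsto_proj (b : HilbertBasis ℕ ℂ H) (y : H) :
    Tendsto (fun m => proj b m y) atTop (𝓝 y) := by
  have h1 := (b.hasSum_repr y).tendsto_sum_nat
  have he : (fun m => ∑ i ∈ Finset.range m, b.repr y i • b i) = fun m => proj b m y := by
    funext m
    rw [proj_apply]
    exact Finset.sum_congr rfl fun i _ => by rw [b.repr_apply_apply]
  rwa [he] at h1

lemma left_tail (b : HilbertBasis ℕ ℂ H) {z : H →L[ℂ] H} (hz : IsCompactOperator ⇑z)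
    {δ : ℝ} (hδ : 0 < δ) : ∃ M, ∀ m ≥ M, ‖z - (proj b m).comp z‖ ≤ δ := by
  obtain ⟨K, hK, hKm⟩ := hz
  obtain ⟨r, hr, hball⟩ := Metric.mem_nhds_iff.mp hKm
  set ρ : ℝ := δ * r / 4 with hρdef
  have hρ : 0 < ρ := by positivity
  obtain ⟨t, htfin, htsub⟩ := Metric.totallyBounded_iff.mp hK.totallyBounded ρ hρ
  have hev : ∀ᶠ m in atTop, ∀ y ∈ t, ‖y - proj b m y‖ ≤ ρ := by
    rw [Filter.eventually_all_finite htfin]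
    intro y hy
    obtain ⟨N, hN⟩ := Metric.tendsto_atTop.mp (tendsto_proj b y) ρ hρ
    refine Filter.eventually_atTop.mpr ⟨N, fun m hm => ?_⟩
    have := hN m hm
    rw [dist_eq_norm] at this
    rw [← norm_neg]
    simpa [neg_sub] using this.le
  obtain ⟨M, hM⟩ := Filter.eventually_atTop.mp hev
  refine ⟨M, fun m hm => ?_⟩
  refine ContinuousLinearMap.opNorm_le_bound _ hδ.le fun h => ?_
  by_cases hh : h = 0
  · simp [hh]
  have hhn : 0 < ‖h‖ := norm_pos_iff.mpr hh
  set h' : H := (↑(r / (2*‖h‖)) : ℂ) • h with hh'def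
  have hh'norm : ‖h'‖ = r/2 := by
    rw [hh'def, norm_smul, Complex.norm_real, Real.norm_eq_abs,
      abs_of_pos (by positivity : (0:ℝ) < r / (2*‖h‖))]
    field_simp
  have hmemK : z h' ∈ K := by
    apply hball
    rw [Metric.mem_ball, dist_zero_right, hh'norm]
    linarith
  obtain ⟨y, hyt, hy⟩ : ∃ y ∈ t, z h' ∈ Metric.ball y ρ := by
    simpa using htsub hmemK
  have hstep : ‖z h' - proj b m (z h')‖ ≤ 2*ρ := by
    have e : z h' - proj b m (z h') =
        ((z h' - y) - proj b m (z h' - y)) + (y - proj b m y) := by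
      rw [map_sub]; abel
    rw [e]
    calc ‖((z h' - y) - proj b m (z h' - y)) + (y - proj b m y)‖
        ≤ ‖(z h' - y) - proj b m (z h' - y)‖ + ‖y - proj b m y‖ := norm_add_le _ _
    _ ≤ ‖z h' - y‖ + ρ := add_le_add (norm_sub_proj_apply_le b m _) (hM m hm y hyt)
    _ ≤ ρ + ρ := by
        rw [Metric.mem_ball, dist_eq_norm] at hy
        exact add_le_add hy.le le_rfl
    _ = 2*ρ := by ring
  have hsc : (↑(2*‖h‖/r) : ℂ) • h' = h := by
    rw [hh'def, smul_smul]
    norm_cast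
    rw [div_mul_div_comm]
    rw [show 2*‖h‖*r = r*(2*‖h‖) by ring, div_self (by positivity : r*(2*‖h‖) ≠ 0)]
    simp
  calc ‖(z - (proj b m).comp z) h‖ = ‖z h - proj b m (z h)‖ := by
        simp [ContinuousLinearMap.sub_apply]
  _ = ‖(↑(2*‖h‖/r) : ℂ) • (z h' - proj b m (z h'))‖ := by
        have e4 : (↑(2*‖h‖/r) : ℂ) • z h' = z h := by rw [← map_smul, hsc]
        rw [smul_sub, e4, ← map_smul, e4]
  _ = (2*‖h‖/r) * ‖z h' - proj b m (z h')‖ := by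
        rw [norm_smul, Complex.norm_real, Real.norm_eq_abs,
          abs_of_pos (by positivity : (0:ℝ) < 2*‖h‖/r)]
  _ ≤ (2*‖h‖/r) * (2*ρ) := by
        exact mul_le_mul_of_nonneg_left hstep (by positivity)
  _ = δ * ‖h‖ := by
        rw [hρdef]; field_simp; ring

lemma compress_approx (b : HilbertBasis ℕ ℂ H) {z : H →L[ℂ] H} (hz : IsCompactOperator ⇑z)
    {δ : ℝ} (hδ : 0 < δ) : ∃ m, ‖z - (proj b m).comp (z.comp (proj b m))‖ ≤ δ := by
  set w := (ContinuousLinearMap.adjoint z).comp z with hw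
  have hwc : IsCompactOperator ⇑w := by
    have e : ⇑w = ⇑(ContinuousLinearMap.adjoint z) ∘ ⇑z := rfl
    rw [e]
    exact hz.continuous_comp (ContinuousLinearMap.adjoint z).continuous
  obtain ⟨M₁, hM₁⟩ := left_tail b hz (half_pos hδ)
  obtain ⟨M₂, hM₂⟩ := left_tail b hwc (by positivity : (0:ℝ) < (δ/2)^2)
  refine ⟨max M₁ M₂, ?_⟩
  set m := max M₁ M₂ with hm
  set P := proj b m with hP
  have hA : ‖z - P.comp z‖ ≤ δ/2 := hM₁ m (le_max_left _ _)
  have hB : ‖w - P.comp w‖ ≤ (δ/2)^2 := hM₂ m (le_max_right _ _)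
  have hPa : ContinuousLinearMap.adjoint P = P := proj_adjoint b m
  have hwa : ContinuousLinearMap.adjoint w = w := by
    rw [hw, ContinuousLinearMap.adjoint_comp, ContinuousLinearMap.adjoint_adjoint]
  have hadj : ContinuousLinearMap.adjoint (w - w.comp P) = w - P.comp w := by
    rw [map_sub, hwa, ContinuousLinearMap.adjoint_comp, hPa, hwa]
  have hwP : ‖w - w.comp P‖ = ‖w - P.comp w‖ := by
    rw [← hadj, LinearIsometryEquiv.norm_map]
  have hC : ‖z - z.comp P‖ ≤ δ/2 := by
    refine ContinuousLinearMap.opNorm_le_bound _ (by positivity) fun h => ?_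
    have key : ‖(z - z.comp P) h‖^2 ≤ ‖w - w.comp P‖ * ‖h‖^2 := by
      have e1 : (z - z.comp P) h = z (h - P h) := by
        simp [ContinuousLinearMap.sub_apply, map_sub]
      rw [e1]
      have e2 : ‖z (h - P h)‖^2 = RCLike.re (⟪h - P h, w (h - P h)⟫_ℂ) := by
        rw [← inner_self_eq_norm_sq (𝕜 := ℂ)]
        congr 1
        exact (ContinuousLinearMap.adjoint_inner_right z (h - P h) (z (h - P h))).symm
      rw [e2]
      calc RCLike.re (⟪h - P h, w (h - P h)⟫_ℂ) ≤ ‖h - P h‖ * ‖w (h - P h)‖ :=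
            re_inner_le_norm _ _
      _ ≤ ‖h‖ * ‖(w - w.comp P) h‖ := by
          have e3 : w (h - P h) = (w - w.comp P) h := by
            simp [ContinuousLinearMap.sub_apply, map_sub]
          rw [e3]
          exact mul_le_mul_of_nonneg_right (norm_sub_proj_apply_le b m h) (norm_nonneg _)
      _ ≤ ‖h‖ * (‖w - w.comp P‖ * ‖h‖) :=
          mul_le_mul_of_nonneg_left (ContinuousLinearMap.le_opNorm _ _) (norm_nonneg _)
      _ = ‖w - w.comp P‖ * ‖h‖^2 := by ring
    have h2 : ‖(z - z.comp P) h‖^2 ≤ ((δ/2) * ‖h‖)^2 := by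
      calc ‖(z - z.comp P) h‖^2 ≤ ‖w - w.comp P‖ * ‖h‖^2 := key
      _ ≤ (δ/2)^2 * ‖h‖^2 := by
          refine mul_le_mul_of_nonneg_right ?_ (by positivity)
          rw [hwP]; exact hB
      _ = ((δ/2) * ‖h‖)^2 := by ring
    have := Real.sqrt_le_sqrt h2
    rwa [Real.sqrt_sq (norm_nonneg _), Real.sqrt_sq (by positivity)] at this
  have e : z - P.comp (z.comp P) = (z - P.comp z) + P.comp (z - z.comp P) := by
    rw [ContinuousLinearMap.comp_sub]; abel
  calc ‖z - P.comp (z.comp P)‖ = ‖(z - P.comp z) + P.comp (z - z.comp P)‖ := by rw [e]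
  _ ≤ ‖z - P.comp z‖ + ‖P.comp (z - z.comp P)‖ := norm_add_le _ _
  _ ≤ δ/2 + ‖P‖ * ‖z - z.comp P‖ := add_le_add hA (ContinuousLinearMap.opNorm_comp_le _ _)
  _ ≤ δ/2 + 1 * (δ/2) := by
      refine add_le_add le_rfl (mul_le_mul (norm_proj_op_le b m) hC (norm_nonneg _) one_pos.le)
  _ = δ := by ring

end AuxProj

section AuxRankOne

open scoped InnerProductSpace

variable {H : Type*} [NormedAddCommGroup H] [InnerProductSpace ℂ H] [CompleteSpace H]

/-- Rank one operator `h ↦ ⟪b i, h⟫ • b j`. -/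
noncomputable def rkOne (b : HilbertBasis ℕ ℂ H) (i j : ℕ) : H →L[ℂ] H :=
  (innerSL ℂ (b i)).smulRight (b j)

lemma mul_rkOne_apply (b : HilbertBasis ℕ ℂ H) (i j : ℕ) (x : H →L[ℂ] H) (h : H) :
    (x * rkOne b i j) h = (⟪b i, h⟫_ℂ) • x (b j) := by
  simp [ContinuousLinearMap.mul_apply, rkOne, ContinuousLinearMap.smulRight_apply, map_smul]

lemma rkOne_mem_KDual (S : BanachSymmSeqSpace) (b : HilbertBasis ℕ ℂ H) (i j : ℕ) :
    rkOne b i j ∈ KDual (H := H) S := by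
  intro x hx
  constructor
  · have e : ⇑(x * rkOne b i j) = ⇑x ∘ ⇑(rkOne b i j) := rfl
    rw [e]
    exact hx.1.comp_clm _
  · refine summable_of_ne_finset_zero (s := ({0} : Finset ℕ)) fun n hn => ?_
    have hn1 : 1 ≤ n := by simp only [Finset.mem_singleton] at hn; omega
    refine le_antisymm ?_ (singVal_nonneg _ n)
    have hle : LinearMap.range (x * rkOne b i j : H →ₗ[ℂ] H) ≤ ℂ ∙ (x (b j)) := by
      rintro v ⟨h, rfl⟩
      rw [Submodule.mem_span_singleton]
      exact ⟨⟪b i, h⟫_ℂ, (mul_rkOne_apply b i j x h).symm⟩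
    haveI : FiniteDimensional ℂ (ℂ ∙ (x (b j))) :=
      FiniteDimensional.span_of_finite ℂ (Set.finite_singleton _)
    haveI : FiniteDimensional ℂ (LinearMap.range (x * rkOne b i j : H →ₗ[ℂ] H)) :=
      Submodule.finiteDimensional_of_le hle
    have hr1 : Module.finrank ℂ (ℂ ∙ (x (b j))) ≤ 1 := by
      rcases eq_or_ne (x (b j)) 0 with hv | hv
      · rw [hv, Submodule.span_zero_singleton]
        simp [finrank_bot]
      · rw [finrank_span_singleton hv]
    have hrk : Module.finrank ℂ (LinearMap.range (x * rkOne b i j : H →ₗ[ℂ] H)) ≤ n :=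
      le_trans (le_trans (Submodule.finrank_mono hle) hr1) hn1
    have := singVal_le (x := x * rkOne b i j) (n := n) (x * rkOne b i j) ‹_› hrk
    simpa using this

lemma traceB_mul_rkOne (b : HilbertBasis ℕ ℂ H) (i j : ℕ) (x : H →L[ℂ] H) :
    traceB b (x * rkOne b i j) = ⟪b i, x (b j)⟫_ℂ := by
  have e : ∀ l, ⟪b l, (x * rkOne b i j) (b l)⟫_ℂ = ⟪b i, b l⟫_ℂ * ⟪b l, x (b j)⟫_ℂ := by
    intro l
    rw [mul_rkOne_apply, inner_smul_right]
  rw [traceB, tsum_congr e]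
  exact b.tsum_inner_mul_inner (b i) (x (b j))

lemma norm_compress_le (b : HilbertBasis ℕ ℂ H) (m : ℕ) (w : H →L[ℂ] H) :
    ‖(proj b m).comp (w.comp (proj b m))‖ ≤
      ∑ j ∈ Finset.range m, ∑ i ∈ Finset.range m, ‖⟪b i, w (b j)⟫_ℂ‖ := by
  have hnn : (0:ℝ) ≤ ∑ j ∈ Finset.range m, ∑ i ∈ Finset.range m, ‖⟪b i, w (b j)⟫_ℂ‖ :=
    Finset.sum_nonneg fun j _ => Finset.sum_nonneg fun i _ => norm_nonneg _
  refine ContinuousLinearMap.opNorm_le_bound _ hnn fun h => ?_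
  have e1 : (proj b m).comp (w.comp (proj b m)) h
      = ∑ j ∈ Finset.range m, (⟪b j, h⟫_ℂ) • proj b m (w (b j)) := by
    have e0 : (proj b m).comp (w.comp (proj b m)) h = proj b m (w (proj b m h)) := rfl
    rw [e0, proj_apply b m h]
    simp only [map_sum, map_smul]
  have hbn : ∀ i : ℕ, ‖b i‖ = 1 := fun i => b.orthonormal.1 i
  calc ‖(proj b m).comp (w.comp (proj b m)) h‖
      = ‖∑ j ∈ Finset.range m, (⟪b j, h⟫_ℂ) • proj b m (w (b j))‖ := by rw [e1]
  _ ≤ ∑ j ∈ Finset.range m, ‖(⟪b j, h⟫_ℂ) • proj b m (w (b j))‖ := norm_sum_le _ _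
  _ ≤ ∑ j ∈ Finset.range m, (∑ i ∈ Finset.range m, ‖⟪b i, w (b j)⟫_ℂ‖) * ‖h‖ := by
      refine Finset.sum_le_sum fun j _ => ?_
      rw [norm_smul]
      have h1 : ‖(⟪b j, h⟫_ℂ)‖ ≤ ‖h‖ := by
        have := norm_inner_le_norm (𝕜 := ℂ) (b j) h
        rwa [hbn j, one_mul] at this
      have h2 : ‖proj b m (w (b j))‖ ≤ ∑ i ∈ Finset.range m, ‖⟪b i, w (b j)⟫_ℂ‖ := by
        rw [proj_apply]
        refine le_trans (norm_sum_le _ _) ?_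
        refine Finset.sum_le_sum fun i _ => ?_
        rw [norm_smul, hbn i, mul_one]
      calc ‖(⟪b j, h⟫_ℂ)‖ * ‖proj b m (w (b j))‖
          ≤ ‖h‖ * (∑ i ∈ Finset.range m, ‖⟪b i, w (b j)⟫_ℂ‖) :=
            mul_le_mul h1 h2 (norm_nonneg _) (norm_nonneg _)
      _ = (∑ i ∈ Finset.range m, ‖⟪b i, w (b j)⟫_ℂ‖) * ‖h‖ := mul_comm _ _
  _ = (∑ j ∈ Finset.range m, ∑ i ∈ Finset.range m, ‖⟪b i, w (b j)⟫_ℂ‖) * ‖h‖ :=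
      (Finset.sum_mul _ _ _).symm

end AuxRankOne

/-- If `E` has the Fatou property then every closed norm ball of `C_E` is
closed in the weak topology `σ(C_E, C_E^×)`; consequently the ball topology `b_{C_E}` is
coarser than `σ(C_E, C_E^×)` (every `b_{C_E}`-open set is `σ(C_E, C_E^×)`-open). -/
theorem ball_topology_coarser_than_weak
    {H : Type*} [NormedAddCommGroup H] [InnerProductSpace ℂ H] [CompleteSpace H]
    [TopologicalSpace.SeparableSpace H] (hinf : ¬ FiniteDimensional ℂ H)
    (S : BanachSymmSeqSpace) (hc0 : S.SubsetC0) (hF : S.Fatou)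
    (b : HilbertBasis ℕ ℂ H) :
    (∀ (c : {x : H →L[ℂ] H // x ∈ CE (H := H) S}) (ε : ℝ), 0 < ε →
      @IsClosed _ (sigmaTop S b)
        {y : {x : H →L[ℂ] H // x ∈ CE (H := H) S} | CEnorm S (y.1 - c.1) ≤ ε}) ∧
    (∀ s : Set {x : H →L[ℂ] H // x ∈ CE (H := H) S},
      (ballTop S).IsOpen s → (sigmaTop S b).IsOpen s) := by
  classical
  letI τ : TopologicalSpace {x : H →L[ℂ] H // x ∈ CE (H := H) S} := sigmaTop S b
  have part1 : ∀ (c : {x : H →L[ℂ] H // x ∈ CE (H := H) S}) (ε : ℝ), 0 < ε →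
      @IsClosed _ (sigmaTop S b)
        {y : {x : H →L[ℂ] H // x ∈ CE (H := H) S} | CEnorm S (y.1 - c.1) ≤ ε} := by
    intro c ε hε
    set B : Set {x : H →L[ℂ] H // x ∈ CE (H := H) S} :=
      {y | CEnorm S (y.1 - c.1) ≤ ε} with hBdef
    show IsClosed B
    refine isClosed_of_closure_subset ?_
    intro x hx
    set z : H →L[ℂ] H := x.1 - c.1 with hzdef
    have hzc : IsCompactOperator ⇑z := by
      have e : ⇑z = ⇑x.1 - ⇑c.1 := by
        funext v; simp [hzdef, ContinuousLinearMap.sub_apply]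
      rw [e]
      exact (x.2.1).sub (c.2.1)
    -- Step 1: each truncated singular value sequence has norm at most ε
    have key_k : ∀ k : ℕ, S.nrm (fun n => if n < k then singVal z n else 0) ≤ ε := by
      intro k
      set χ : ℕ → ℝ := fun n => if n < k then (1:ℝ) else 0 with hχdef
      have hχmem : χ ∈ S.carrier := indicator_mem S k
      set Cχ : ℝ := S.nrm χ with hCχdef
      have hCχ0 : 0 ≤ Cχ := nrm_nonneg S hχmem
      refine le_of_forall_pos_le_add fun δ' hδ' => ?_
      set δ : ℝ := δ' / (2 * (Cχ + 1)) with hδdef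
      have hδ : 0 < δ := by positivity
      obtain ⟨m, hPz⟩ := compress_approx b hzc hδ
      set δ₂ : ℝ := δ / (((m:ℝ)+1)^2) with hδ₂def
      have hδ₂ : 0 < δ₂ := by positivity
      set o : Set {x : H →L[ℂ] H // x ∈ CE (H := H) S} :=
        ⋂ i ∈ Finset.range m, ⋂ j ∈ Finset.range m,
          {v : {x : H →L[ℂ] H // x ∈ CE (H := H) S} |
            traceB b (v.1 * rkOne b i j) ∈
              Metric.ball (traceB b (x.1 * rkOne b i j)) δ₂} with hodef
      have ho : IsOpen o := by
        refine isOpen_biInter_finset fun i _ => ?_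
        refine isOpen_biInter_finset fun j _ => ?_
        have hKD : rkOne b i j ∈ KDual (H := H) S := rkOne_mem_KDual S b i j
        have hle : (sigmaTop S b) ≤ TopologicalSpace.induced
            (fun v : {x : H →L[ℂ] H // x ∈ CE (H := H) S} =>
              traceB b (v.1 * rkOne b i j)) inferInstance := by
          exact iInf_le (fun y : {y : H →L[ℂ] H // y ∈ KDual (H := H) S} =>
            TopologicalSpace.induced
              (fun v : {x : H →L[ℂ] H // x ∈ CE (H := H) S} =>
                traceB b (v.1 * y.1)) inferInstance) ⟨rkOne b i j, hKD⟩
        exact hle _ ⟨Metric.ball (traceB b (x.1 * rkOne b i j)) δ₂, Metric.isOpen_ball, rfl⟩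
      have hxo : x ∈ o := by
        simp only [hodef, Set.mem_iInter]
        intro i _ j _
        exact Metric.mem_ball_self hδ₂
      obtain ⟨x', hx'o, hx'B⟩ := (mem_closure_iff.mp hx) o ho hxo
      set z' : H →L[ℂ] H := x'.1 - c.1 with hz'def
      have hmat : ‖(proj b m).comp ((x.1 - x'.1).comp (proj b m))‖ ≤ δ := by
        refine le_trans (norm_compress_le b m (x.1 - x'.1)) ?_
        have hentry : ∀ j ∈ Finset.range m, ∀ i ∈ Finset.range m,
            ‖⟪b i, (x.1 - x'.1) (b j)⟫_ℂ‖ ≤ δ₂ := by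
          intro j hj i hi
          have h0 := hx'o
          simp only [hodef, Set.mem_iInter] at h0
          have h1 := h0 i hi j hj
          rw [Set.mem_setOf_eq, Metric.mem_ball, traceB_mul_rkOne, traceB_mul_rkOne,
            dist_eq_norm] at h1
          have e : (⟪b i, (x.1 - x'.1) (b j)⟫_ℂ)
              = ⟪b i, x.1 (b j)⟫_ℂ - ⟪b i, x'.1 (b j)⟫_ℂ := by
            rw [ContinuousLinearMap.sub_apply, inner_sub_right]
          rw [e, norm_sub_rev]
          exact h1.le
        calc ∑ j ∈ Finset.range m, ∑ i ∈ Finset.range m, ‖⟪b i, (x.1 - x'.1) (b j)⟫_ℂ‖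
            ≤ ∑ j ∈ Finset.range m, ∑ i ∈ Finset.range m, δ₂ := by
              refine Finset.sum_le_sum fun j hj => Finset.sum_le_sum fun i hi => hentry j hj i hi
        _ = (m : ℝ) * ((m : ℝ) * δ₂) := by
              simp [Finset.sum_const, Finset.card_range, nsmul_eq_mul, mul_assoc]
        _ ≤ ((m:ℝ)+1) * (((m:ℝ)+1) * δ₂) := by
              have hm0 : (0:ℝ) ≤ (m:ℝ) := Nat.cast_nonneg m
              nlinarith
        _ = δ := by
              rw [hδ₂def]
              field_simp
      have hsv : ∀ n, singVal z n ≤ singVal z' n + 2*δ := by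
        intro n
        have hP1 : ‖proj b m‖ ≤ 1 := norm_proj_op_le b m
        have s1 := singVal_weyl z ((proj b m).comp (z.comp (proj b m))) n
        have s2 := singVal_weyl ((proj b m).comp (z.comp (proj b m)))
          ((proj b m).comp (z'.comp (proj b m))) n
        have s3 : singVal ((proj b m).comp (z'.comp (proj b m))) n ≤ singVal z' n :=
          singVal_comp_le _ _ _ hP1 hP1 n
        have e : (proj b m).comp (z.comp (proj b m))
            - (proj b m).comp (z'.comp (proj b m))
            = (proj b m).comp ((x.1 - x'.1).comp (proj b m)) := by
          rw [← ContinuousLinearMap.comp_sub, ← ContinuousLinearMap.sub_comp]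
          rw [hzdef, hz'def, sub_sub_sub_cancel_right]
        rw [e] at s2
        linarith [hPz, hmat]
      have hz'mem : (fun n => singVal z' n) ∈ S.carrier := diff_singVal_mem S x'.2.2 c.2.2
      have hz'nrm : S.nrm (fun n => singVal z' n) ≤ ε := hx'B
      set g : ℕ → ℝ := fun n => singVal z' n + (2*δ) * χ n with hgdef
      have hge : ((fun n => singVal z' n) + (2*δ) • χ) = g := by
        funext n; simp [hgdef, Pi.add_apply, Pi.smul_apply, smul_eq_mul]
      have hgmem : g ∈ S.carrier := by
        have := S.add_mem _ hz'mem _ (S.smul_mem (2*δ) _ hχmem)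
        rwa [hge] at this
      have hgnrm : S.nrm g ≤ ε + 2*δ*Cχ := by
        have h1 := S.nrm_triangle _ hz'mem _ (S.smul_mem (2*δ) _ hχmem)
        rw [hge] at h1
        have h2 := S.nrm_smul (2*δ) _ hχmem
        rw [h2, abs_of_pos (by positivity : (0:ℝ) < 2*δ)] at h1
        calc S.nrm g ≤ S.nrm (fun n => singVal z' n) + 2*δ*Cχ := h1
        _ ≤ ε + 2*δ*Cχ := by linarith
      have hχ0 : ∀ n, 0 ≤ χ n := by
        intro n; rw [hχdef]; dsimp only; split <;> norm_num
      have hχmono : ∀ ⦃i j : ℕ⦄, i ≤ j → χ j ≤ χ i := by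
        intro i j hij; rw [hχdef]; dsimp only
        by_cases h : j < k
        · simp [h, show i < k by omega]
        · simp only [h, if_false]; split <;> norm_num
      have hg0 : ∀ n, 0 ≤ g n := fun n =>
        add_nonneg (singVal_nonneg z' n) (by positivity)
      have hgmono : ∀ ⦃i j : ℕ⦄, i ≤ j → g j ≤ g i := by
        intro i j hij
        exact add_le_add (singVal_antitone z' hij)
          (mul_le_mul_of_nonneg_left (hχmono hij) (by positivity))
      have ht0 : ∀ n, 0 ≤ (fun n => if n < k then singVal z n else 0) n := by
        intro n; dsimp only; split
        · exact singVal_nonneg z n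
        · exact le_rfl
      have htmono : ∀ ⦃i j : ℕ⦄, i ≤ j →
          (fun n => if n < k then singVal z n else 0) j
            ≤ (fun n => if n < k then singVal z n else 0) i := by
        intro i j hij; dsimp only
        by_cases h : j < k
        · rw [if_pos h, if_pos (by omega : i < k)]
          exact singVal_antitone z hij
        · rw [if_neg h]
          split
          · exact singVal_nonneg z i
          · exact le_rfl
      have htle : ∀ n, (fun n => if n < k then singVal z n else 0) n ≤ g n := by
        intro n; dsimp only
        by_cases h : n < k
        · rw [if_pos h]
          have hχ1 : χ n = 1 := if_pos h
          have := hsv n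
          rw [hgdef]
          dsimp only
          rw [hχ1, mul_one]
          linarith
        · rw [if_neg h]
          exact hg0 n
      have hfinal := (mem_of_dominated S hgmem ht0 htmono hg0 hgmono htle).2
      calc S.nrm (fun n => if n < k then singVal z n else 0) ≤ S.nrm g := hfinal
      _ ≤ ε + 2*δ*Cχ := hgnrm
      _ ≤ ε + δ' := by
          have h1 : 2*δ*Cχ ≤ δ' := by
            rw [hδdef]
            have h2 : (0:ℝ) < Cχ + 1 := by positivity
            have h3 : 2 * (δ' / (2 * (Cχ + 1))) * Cχ = δ' * Cχ / (Cχ + 1) := by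
              field_simp
            rw [h3, div_le_iff₀ h2]
            nlinarith
          linarith
    -- Step 2: Fatou property
    set a : ℕ → ℕ → ℝ := fun k n => if n < k then singVal z n else 0 with hadef
    have hamem : ∀ k, a k ∈ S.carrier := by
      intro k
      have hdmem : ((singVal z 0) • fun n => if n < k then (1:ℝ) else 0) ∈ S.carrier :=
        S.smul_mem (singVal z 0) _ (indicator_mem S k)
      refine (mem_of_dominated S hdmem ?_ ?_ ?_ ?_ ?_).1
      · intro n; rw [hadef]; dsimp only; split
        · exact singVal_nonneg z n
        · exact le_rfl
      · intro i j hij; rw [hadef]; dsimp only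
        by_cases h : j < k
        · rw [if_pos h, if_pos (by omega : i < k)]
          exact singVal_antitone z hij
        · rw [if_neg h]; split
          · exact singVal_nonneg z i
          · exact le_rfl
      · intro n; dsimp only [Pi.smul_apply, smul_eq_mul]; split
        · rw [mul_one]; exact singVal_nonneg z 0
        · rw [mul_zero]
      · intro i j hij; dsimp only [Pi.smul_apply, smul_eq_mul]
        by_cases h : j < k
        · rw [if_pos h, if_pos (by omega : i < k)]
        · rw [if_neg h, mul_zero]; split
          · rw [mul_one]; exact singVal_nonneg z 0
          · rw [mul_zero]
      · intro n; rw [hadef]; dsimp only [Pi.smul_apply, smul_eq_mul]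
        by_cases h : n < k
        · rw [if_pos h, if_pos h, mul_one]
          exact singVal_antitone z (Nat.zero_le n)
        · rw [if_neg h, if_neg h, mul_zero]
    have ha0 : ∀ k n, 0 ≤ a k n := by
      intro k n; rw [hadef]; dsimp only; split
      · exact singVal_nonneg z n
      · exact le_rfl
    have hamono : ∀ k n, a k n ≤ a (k+1) n := by
      intro k n; rw [hadef]; dsimp only
      by_cases h : n < k
      · rw [if_pos h, if_pos (by omega : n < k+1)]
      · rw [if_neg h]; split
        · exact singVal_nonneg z n
        · exact le_rfl
    obtain ⟨bb, hbbmem, hbb1, hbb2⟩ := hF a hamem ha0 hamono ⟨ε, key_k⟩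
    have hbbeq : bb = fun n => singVal z n := by
      funext n
      refine (hbb1 n).unique ?_
      constructor
      · rintro r ⟨k, rfl⟩
        rw [hadef]; dsimp only; split
        · exact le_rfl
        · exact singVal_nonneg z n
      · intro u hu
        have h1 : a (n+1) n ∈ {r : ℝ | ∃ k, r = a k n} := ⟨n+1, rfl⟩
        have h2 := hu h1
        rw [hadef] at h2
        simpa [Nat.lt_succ_self] using h2
    rw [hbbeq] at hbb2
    show CEnorm S (x.1 - c.1) ≤ ε
    exact hbb2.2 (by rintro r ⟨k, rfl⟩; exact key_k k)
  refine ⟨part1, ?_⟩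
  intro s hs
  have hs' : TopologicalSpace.GenerateOpen
      {s | ∃ (c : {x : H →L[ℂ] H // x ∈ CE (H := H) S}) (ε : ℝ), 0 < ε ∧
        s = {y : {x : H →L[ℂ] H // x ∈ CE (H := H) S} | CEnorm S (y.1 - c.1) ≤ ε}ᶜ} s := hs
  clear hs
  induction hs' with
  | basic u hu =>
    obtain ⟨c, ε, hε, rfl⟩ := hu
    exact (part1 c ε hε).isOpen_compl
  | univ => exact isOpen_univ
  | inter s t _ _ ihs iht => exact IsOpen.inter ihs iht
  | sUnion K _ ih => exact isOpen_sUnion ih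
end

section
/- Let H be a complex separable infinite-dimensional Hilbert space, let E ⊆ c₀ be a Banach symmetric sequence space, and let C_E be the associated Banach symmetric ideal. Then for every x ∈ C_E there exists a sequence {x_n} of finite rank operators on H such that x_n → x in the weak topology σ(C_E, C_E^×). -/
open scoped InnerProductSpace
open Filter Topology

namespace FRWD

set_option linter.unusedSectionVars false in
section

variable {H : Type*} [NormedAddCommGroup H] [InnerProductSpace ℂ H] [CompleteSpace H]

private lemma range_zero_eq_bot : LinearMap.range (((0 : H →L[ℂ] H)) : H →ₗ[ℂ] H) = ⊥ := by
  ext v; simp [LinearMap.mem_range, eq_comm]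

lemma norm_mem_singValSet (z : H →L[ℂ] H) (n : ℕ) :
    ‖z‖ ∈ {c : ℝ | ∃ F : H →L[ℂ] H, FiniteDimensional ℂ (LinearMap.range ((F) : H →ₗ[ℂ] H)) ∧
      Module.finrank ℂ (LinearMap.range ((F) : H →ₗ[ℂ] H)) ≤ n ∧ ‖z - F‖ = c} := by
  refine ⟨0, by rw [range_zero_eq_bot]; infer_instance, ?_, by simp⟩
  rw [range_zero_eq_bot]; simp

lemma singValSet_nonempty (z : H →L[ℂ] H) (n : ℕ) :
    {c : ℝ | ∃ F : H →L[ℂ] H, FiniteDimensional ℂ (LinearMap.range ((F) : H →ₗ[ℂ] H)) ∧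
      Module.finrank ℂ (LinearMap.range ((F) : H →ₗ[ℂ] H)) ≤ n ∧ ‖z - F‖ = c}.Nonempty :=
  ⟨‖z‖, norm_mem_singValSet z n⟩

lemma singValSet_bddBelow (z : H →L[ℂ] H) (n : ℕ) :
    BddBelow {c : ℝ | ∃ F : H →L[ℂ] H, FiniteDimensional ℂ (LinearMap.range ((F) : H →ₗ[ℂ] H)) ∧
      Module.finrank ℂ (LinearMap.range ((F) : H →ₗ[ℂ] H)) ≤ n ∧ ‖z - F‖ = c} := by
  refine ⟨0, fun c hc => ?_⟩
  obtain ⟨F, -, -, rfl⟩ := hc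
  positivity

lemma singVal_nonneg (z : H →L[ℂ] H) (n : ℕ) : 0 ≤ singVal z n := by
  apply Real.sInf_nonneg
  rintro c ⟨F, -, -, rfl⟩
  positivity

lemma singVal_le_norm (z : H →L[ℂ] H) (n : ℕ) : singVal z n ≤ ‖z‖ :=
  csInf_le (singValSet_bddBelow z n) (norm_mem_singValSet z n)

lemma singVal_antitone (z : H →L[ℂ] H) : Antitone (singVal z) := by
  intro m n hmn
  exact csInf_le_csInf (singValSet_bddBelow z n) (singValSet_nonempty z m)
    (fun c hc => by obtain ⟨F, h1, h2, rfl⟩ := hc; exact ⟨F, h1, h2.trans hmn, rfl⟩)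

lemma exists_approx (z : H →L[ℂ] H) (k : ℕ) {δ : ℝ} (hδ : 0 < δ) :
    ∃ F : H →L[ℂ] H, FiniteDimensional ℂ (LinearMap.range ((F) : H →ₗ[ℂ] H)) ∧
      Module.finrank ℂ (LinearMap.range ((F) : H →ₗ[ℂ] H)) ≤ k ∧ ‖z - F‖ < singVal z k + δ := by
  have h : singVal z k < singVal z k + δ := lt_add_of_pos_right _ hδ
  obtain ⟨c, hc, hlt⟩ := exists_lt_of_csInf_lt (singValSet_nonempty z k) h
  obtain ⟨F, h1, h2, rfl⟩ := hc
  exact ⟨F, h1, h2, hlt⟩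

lemma decRearrange_le {u v : ℕ → ℝ} (huv : ∀ k, |u k| ≤ |v k|) {C : ℝ}
    (hC : ∀ k, |v k| ≤ C) (n : ℕ) : decRearrange u n ≤ decRearrange v n := by
  apply csInf_le_csInf
  · refine ⟨0, fun c hc => ?_⟩
    obtain ⟨F, _, hFc⟩ := hc
    obtain ⟨k, hk⟩ := Infinite.exists_notMem_finset F
    exact le_trans (abs_nonneg _) (hFc k hk)
  · exact ⟨C, ∅, by simp, fun k _ => hC k⟩
  · rintro c ⟨F, hF, hFc⟩
    exact ⟨F, hF, fun k hk => (huv k).trans (hFc k hk)⟩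

lemma singVal_comp_le (P : H →L[ℂ] H) (hP : ∀ v, ‖P v‖ ≤ ‖v‖) (z : H →L[ℂ] H) (n : ℕ) :
    singVal (P ∘L z) n ≤ singVal z n := by
  apply le_csInf (singValSet_nonempty z n)
  rintro c ⟨F, h1, h2, rfl⟩
  have hle : LinearMap.range ((P ∘L F) : H →ₗ[ℂ] H) ≤ (LinearMap.range ((F) : H →ₗ[ℂ] H)).map (P : H →ₗ[ℂ] H) := by
    rintro v ⟨u, rfl⟩
    exact ⟨F u, LinearMap.mem_range.2 ⟨u, rfl⟩, rfl⟩
  haveI := h1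
  haveI : FiniteDimensional ℂ ((LinearMap.range ((F) : H →ₗ[ℂ] H)).map (P : H →ₗ[ℂ] H)) :=
    Module.Finite.map _ _
  have hfd : FiniteDimensional ℂ (LinearMap.range ((P ∘L F) : H →ₗ[ℂ] H)) :=
    Submodule.finiteDimensional_of_le hle
  have hrk : Module.finrank ℂ (LinearMap.range ((P ∘L F) : H →ₗ[ℂ] H)) ≤ n :=
    le_trans (Submodule.finrank_mono hle) (le_trans (Submodule.finrank_map_le _ _) h2)
  have hnorm : ‖P ∘L z - P ∘L F‖ ≤ ‖z - F‖ := by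
    have h : P ∘L z - P ∘L F = P ∘L (z - F) := (ContinuousLinearMap.comp_sub _ _ _).symm
    rw [h]
    refine ContinuousLinearMap.opNorm_le_bound _ (norm_nonneg _) fun v => ?_
    calc ‖(P ∘L (z - F)) v‖ = ‖P ((z - F) v)‖ := rfl
      _ ≤ ‖(z - F) v‖ := hP _
      _ ≤ ‖z - F‖ * ‖v‖ := ContinuousLinearMap.le_opNorm _ _
  exact le_trans (csInf_le (singValSet_bddBelow _ n) ⟨P ∘L F, hfd, hrk, rfl⟩) hnorm

lemma cs_sum (b : HilbertBasis ℕ ℂ H) (g h : H) (T : Finset ℕ) :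
    ∑ i ∈ T, ‖⟪b i, g⟫_ℂ‖ * ‖⟪b i, h⟫_ℂ‖ ≤ ‖g‖ * ‖h‖ := by
  have hsq := Finset.sum_mul_sq_le_sq_mul_sq T (fun i => ‖⟪b i, g⟫_ℂ‖) (fun i => ‖⟪b i, h⟫_ℂ‖)
  have hg : ∑ i ∈ T, ‖⟪b i, g⟫_ℂ‖ ^ 2 ≤ ‖g‖ ^ 2 := b.orthonormal.sum_inner_products_le g
  have hh : ∑ i ∈ T, ‖⟪b i, h⟫_ℂ‖ ^ 2 ≤ ‖h‖ ^ 2 := b.orthonormal.sum_inner_products_le h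
  have h1 : (∑ i ∈ T, ‖⟪b i, g⟫_ℂ‖ * ‖⟪b i, h⟫_ℂ‖) ^ 2 ≤ (‖g‖ * ‖h‖) ^ 2 := by
    calc (∑ i ∈ T, ‖⟪b i, g⟫_ℂ‖ * ‖⟪b i, h⟫_ℂ‖) ^ 2
        ≤ (∑ i ∈ T, ‖⟪b i, g⟫_ℂ‖ ^ 2) * (∑ i ∈ T, ‖⟪b i, h⟫_ℂ‖ ^ 2) := hsq
      _ ≤ ‖g‖ ^ 2 * ‖h‖ ^ 2 := by
          apply mul_le_mul hg hh (Finset.sum_nonneg fun i _ => by positivity) (by positivity)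
      _ = (‖g‖ * ‖h‖) ^ 2 := by ring
  have h2 : 0 ≤ ∑ i ∈ T, ‖⟪b i, g⟫_ℂ‖ * ‖⟪b i, h⟫_ℂ‖ :=
    Finset.sum_nonneg fun i _ => by positivity
  nlinarith [norm_nonneg g, norm_nonneg h, mul_nonneg (norm_nonneg g) (norm_nonneg h)]

lemma diag_bound (b : HilbertBasis ℕ ℂ H) (G : H →L[ℂ] H)
    [hfd : FiniteDimensional ℂ (LinearMap.range ((G) : H →ₗ[ℂ] H))] (T : Finset ℕ) :
    ∑ i ∈ T, ‖⟪b i, G (b i)⟫_ℂ‖ ≤ (Module.finrank ℂ (LinearMap.range ((G) : H →ₗ[ℂ] H)) : ℝ) * ‖G‖ := by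
  set K : Submodule ℂ H := LinearMap.range ((G) : H →ₗ[ℂ] H) with hK
  set r : ℕ := Module.finrank ℂ K with hr
  let o : OrthonormalBasis (Fin r) ℂ K := stdOrthonormalBasis ℂ K
  have hexp : ∀ v : H, G v = ∑ j : Fin r, ⟪(o j : H), G v⟫_ℂ • (o j : H) := by
    intro v
    have hm : G v ∈ K := LinearMap.mem_range.2 ⟨v, rfl⟩
    have h1 : (∑ j : Fin r, ⟪o j, (⟨G v, hm⟩ : K)⟫_ℂ • o j) = (⟨G v, hm⟩ : K) :=
      o.sum_repr' ⟨G v, hm⟩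
    have h2 := congrArg (Submodule.subtype K) h1
    simpa [Submodule.coe_inner, map_sum] using h2.symm
  have hterm : ∀ i, ‖⟪b i, G (b i)⟫_ℂ‖ ≤
      ∑ j : Fin r, ‖⟪b i, (ContinuousLinearMap.adjoint G) (o j : H)⟫_ℂ‖ *
        ‖⟪b i, (o j : H)⟫_ℂ‖ := by
    intro i
    calc ‖⟪b i, G (b i)⟫_ℂ‖
        = ‖∑ j : Fin r, ⟪(o j : H), G (b i)⟫_ℂ * ⟪b i, (o j : H)⟫_ℂ‖ := by
          congr 1
          conv_lhs => rw [hexp (b i)]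
          rw [inner_sum]
          simp_rw [inner_smul_right]
      _ ≤ ∑ j : Fin r, ‖⟪(o j : H), G (b i)⟫_ℂ * ⟪b i, (o j : H)⟫_ℂ‖ := norm_sum_le _ _
      _ = ∑ j : Fin r, ‖⟪b i, (ContinuousLinearMap.adjoint G) (o j : H)⟫_ℂ‖ *
            ‖⟪b i, (o j : H)⟫_ℂ‖ := by
          refine Finset.sum_congr rfl fun j _ => ?_
          rw [norm_mul]
          congr 1
          rw [← ContinuousLinearMap.adjoint_inner_left G (b i) (o j : H)]
          exact norm_inner_symm _ _
  calc ∑ i ∈ T, ‖⟪b i, G (b i)⟫_ℂ‖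
      ≤ ∑ i ∈ T, ∑ j : Fin r, ‖⟪b i, (ContinuousLinearMap.adjoint G) (o j : H)⟫_ℂ‖ *
          ‖⟪b i, (o j : H)⟫_ℂ‖ :=
        Finset.sum_le_sum fun i _ => hterm i
    _ = ∑ j : Fin r, ∑ i ∈ T, ‖⟪b i, (ContinuousLinearMap.adjoint G) (o j : H)⟫_ℂ‖ *
          ‖⟪b i, (o j : H)⟫_ℂ‖ :=
        Finset.sum_comm
    _ ≤ ∑ j : Fin r, ‖(ContinuousLinearMap.adjoint G) (o j : H)‖ * ‖(o j : H)‖ :=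
        Finset.sum_le_sum fun j _ => cs_sum b _ _ T
    _ ≤ ∑ j : Fin r, ‖G‖ := by
        refine Finset.sum_le_sum fun j _ => ?_
        have h1 : ‖(o j : H)‖ = 1 := by
          have := o.orthonormal.1 j
          exact this
        rw [h1, mul_one]
        calc ‖(ContinuousLinearMap.adjoint G) (o j : H)‖
            ≤ ‖ContinuousLinearMap.adjoint G‖ * ‖(o j : H)‖ :=
              ContinuousLinearMap.le_opNorm _ _
          _ = ‖G‖ := by rw [h1, mul_one, ContinuousLinearMap.adjoint.norm_map]
    _ = (r : ℝ) * ‖G‖ := by simp [Finset.sum_const, nsmul_eq_mul]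

lemma range_sub_le (A B : H →L[ℂ] H) :
    LinearMap.range ((A - B) : H →ₗ[ℂ] H) ≤ LinearMap.range ((A) : H →ₗ[ℂ] H) ⊔ LinearMap.range ((B) : H →ₗ[ℂ] H) := by
  rintro v ⟨u, rfl⟩
  have h : (A - B) u = A u - B u := rfl
  change A u - B u ∈ _
  exact Submodule.sub_mem _ (Submodule.mem_sup_left (LinearMap.mem_range.2 ⟨u, rfl⟩))
    (Submodule.mem_sup_right (LinearMap.mem_range.2 ⟨u, rfl⟩))

lemma finrank_sub_le (A B : H →L[ℂ] H) [FiniteDimensional ℂ (LinearMap.range ((A) : H →ₗ[ℂ] H))]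
    [FiniteDimensional ℂ (LinearMap.range ((B) : H →ₗ[ℂ] H))] :
    Module.finrank ℂ (LinearMap.range ((A - B) : H →ₗ[ℂ] H)) ≤
      Module.finrank ℂ (LinearMap.range ((A) : H →ₗ[ℂ] H)) + Module.finrank ℂ (LinearMap.range ((B) : H →ₗ[ℂ] H)) :=
  (Submodule.finrank_mono (range_sub_le A B)).trans
    (Submodule.finrank_add_le_finrank_add_finrank _ _)


lemma summable_diag (b : HilbertBasis ℕ ℂ H) (z : H →L[ℂ] H)
    (hs : Summable fun n => singVal z n) :
    Summable fun i => ⟪b i, z (b i)⟫_ℂ := by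
  have hchoice : ∀ m : ℕ, ∃ F : H →L[ℂ] H, FiniteDimensional ℂ (LinearMap.range ((F) : H →ₗ[ℂ] H)) ∧
      Module.finrank ℂ (LinearMap.range ((F) : H →ₗ[ℂ] H)) ≤ 2 ^ m ∧
      ‖z - F‖ < singVal z (2 ^ m) + (4 : ℝ)⁻¹ ^ m :=
    fun m => exists_approx z (2 ^ m) (by positivity)
  choose G hGfd hGrk hGnorm using hchoice
  haveI : ∀ m, FiniteDimensional ℂ (LinearMap.range ((G m) : H →ₗ[ℂ] H)) := hGfd
  set t : ℕ → ℝ := fun m =>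
    ((2 : ℝ) ^ (m + 1) + 2 ^ m) * (‖z - G (m + 1)‖ + ‖z - G m‖) with htdef
  have ht_nonneg : ∀ m, 0 ≤ t m := fun m => by positivity
  have hzG : ∀ m, ‖z - G m‖ ≤ singVal z (2 ^ m) + (4 : ℝ)⁻¹ ^ m := fun m => (hGnorm m).le
  have hA : Summable (fun m : ℕ => (2 : ℝ) ^ m * singVal z (2 ^ m)) :=
    (summable_condensed_iff_of_nonneg (fun n => singVal_nonneg z n)
      (fun m n _ hmn => singVal_antitone z hmn)).mpr hs
  have hgeom : Summable (fun m : ℕ => ((2 : ℝ)⁻¹) ^ m) :=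
    summable_geometric_of_lt_one (by norm_num) (by norm_num)
  have ht_le : ∀ m, t m ≤ 6 * ((2 : ℝ) ^ m * singVal z (2 ^ m)) + 6 * ((2 : ℝ)⁻¹) ^ m := by
    intro m
    have h1 : ‖z - G (m + 1)‖ ≤ singVal z (2 ^ m) + (4 : ℝ)⁻¹ ^ m := by
      refine (hzG (m + 1)).trans (add_le_add ?_ ?_)
      · exact singVal_antitone z (pow_le_pow_right₀ one_le_two (Nat.le_succ m))
      · exact pow_le_pow_of_le_one (by norm_num) (by norm_num) (Nat.le_succ m)
    have h2 := hzG m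
    have hpow : (2 : ℝ) ^ m * (4 : ℝ)⁻¹ ^ m = ((2 : ℝ)⁻¹) ^ m := by
      rw [← mul_pow]; norm_num
    have ht_m : t m = ((2 : ℝ) ^ (m + 1) + 2 ^ m) * (‖z - G (m + 1)‖ + ‖z - G m‖) := rfl
    rw [ht_m]
    have h3 : ((2 : ℝ) ^ (m + 1) + 2 ^ m) = 3 * 2 ^ m := by rw [pow_succ]; ring
    rw [h3]
    calc 3 * (2 : ℝ) ^ m * (‖z - G (m + 1)‖ + ‖z - G m‖)
        ≤ 3 * (2 : ℝ) ^ m * ((singVal z (2 ^ m) + (4 : ℝ)⁻¹ ^ m) +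
            (singVal z (2 ^ m) + (4 : ℝ)⁻¹ ^ m)) := by
          apply mul_le_mul_of_nonneg_left (add_le_add h1 h2) (by positivity)
      _ = 6 * ((2 : ℝ) ^ m * singVal z (2 ^ m)) + 6 * ((2 : ℝ) ^ m * (4 : ℝ)⁻¹ ^ m) := by
          ring
      _ = 6 * ((2 : ℝ) ^ m * singVal z (2 ^ m)) + 6 * ((2 : ℝ)⁻¹) ^ m := by rw [hpow]
  have hT : Summable t :=
    Summable.of_nonneg_of_le ht_nonneg ht_le ((hA.mul_left 6).add (hgeom.mul_left 6))
  set Ct : ℝ := ∑' m, t m with hCt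
  have hCt_part : ∀ M, ∑ m ∈ Finset.range M, t m ≤ Ct :=
    fun M => Summable.sum_le_tsum _ (fun m _ => ht_nonneg m) hT
  set B0 : ℝ := (Module.finrank ℂ (LinearMap.range ((G 0) : H →ₗ[ℂ] H)) : ℝ) * ‖G 0‖ with hB0
  have hGM : ∀ M N, ∑ i ∈ Finset.range N, ‖⟪b i, G M (b i)⟫_ℂ‖ ≤
      B0 + ∑ m ∈ Finset.range M, t m := by
    intro M
    induction M with
    | zero => intro N; simpa using diag_bound b (G 0) (Finset.range N)
    | succ M ih =>
      intro N
      have hterm : ∀ i, ‖⟪b i, G (M + 1) (b i)⟫_ℂ‖ ≤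
          ‖⟪b i, G M (b i)⟫_ℂ‖ + ‖⟪b i, (G (M + 1) - G M) (b i)⟫_ℂ‖ := by
        intro i
        have h : ⟪b i, G (M + 1) (b i)⟫_ℂ =
            ⟪b i, G M (b i)⟫_ℂ + ⟪b i, (G (M + 1) - G M) (b i)⟫_ℂ := by
          rw [ContinuousLinearMap.sub_apply, inner_sub_right]; ring
        rw [h]; exact norm_add_le _ _
      have hdiff_norm : ‖G (M + 1) - G M‖ ≤ ‖z - G (M + 1)‖ + ‖z - G M‖ := by
        have h : G (M + 1) - G M = (z - G M) - (z - G (M + 1)) := by abel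
        rw [h]
        exact (norm_sub_le _ _).trans (by rw [add_comm])
      have hdiff_rk : (Module.finrank ℂ (LinearMap.range ((G (M + 1) - G M) : H →ₗ[ℂ] H)) : ℝ) ≤
          (2 : ℝ) ^ (M + 1) + 2 ^ M := by
        have h1 : Module.finrank ℂ (LinearMap.range ((G (M + 1) - G M) : H →ₗ[ℂ] H)) ≤
            2 ^ (M + 1) + 2 ^ M :=
          (finrank_sub_le (G (M + 1)) (G M)).trans (add_le_add (hGrk (M + 1)) (hGrk M))
        calc (Module.finrank ℂ (LinearMap.range ((G (M + 1) - G M) : H →ₗ[ℂ] H)) : ℝ)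
            ≤ ((2 ^ (M + 1) + 2 ^ M : ℕ) : ℝ) := Nat.cast_le.2 h1
          _ = (2 : ℝ) ^ (M + 1) + 2 ^ M := by push_cast; ring
      calc ∑ i ∈ Finset.range N, ‖⟪b i, G (M + 1) (b i)⟫_ℂ‖
          ≤ ∑ i ∈ Finset.range N,
              (‖⟪b i, G M (b i)⟫_ℂ‖ + ‖⟪b i, (G (M + 1) - G M) (b i)⟫_ℂ‖) :=
            Finset.sum_le_sum fun i _ => hterm i
        _ = (∑ i ∈ Finset.range N, ‖⟪b i, G M (b i)⟫_ℂ‖) +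
            ∑ i ∈ Finset.range N, ‖⟪b i, (G (M + 1) - G M) (b i)⟫_ℂ‖ :=
            Finset.sum_add_distrib
        _ ≤ (B0 + ∑ m ∈ Finset.range M, t m) +
            (Module.finrank ℂ (LinearMap.range ((G (M + 1) - G M) : H →ₗ[ℂ] H)) : ℝ) *
              ‖G (M + 1) - G M‖ := by
            haveI : FiniteDimensional ℂ (LinearMap.range ((G (M + 1) - G M) : H →ₗ[ℂ] H)) :=
              Submodule.finiteDimensional_of_le (range_sub_le (G (M + 1)) (G M))
            exact add_le_add (ih N) (diag_bound b _ _)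
        _ ≤ (B0 + ∑ m ∈ Finset.range M, t m) + t M := by
            refine add_le_add_right ?_ _
            rw [htdef]
            exact mul_le_mul hdiff_rk hdiff_norm (norm_nonneg _) (by positivity)
        _ = B0 + ∑ m ∈ Finset.range (M + 1), t m := by
            rw [Finset.sum_range_succ]; ring
  have hb1 : ∀ i : ℕ, ‖(b i : H)‖ = 1 := fun i => b.orthonormal.1 i
  have hbnd : ∀ N, ∑ i ∈ Finset.range N, ‖⟪b i, z (b i)⟫_ℂ‖ ≤ B0 + Ct := by
    intro N
    have key : ∀ M, ∑ i ∈ Finset.range N, ‖⟪b i, z (b i)⟫_ℂ‖ ≤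
        (N : ℝ) * ‖z - G M‖ + (B0 + Ct) := by
      intro M
      have hterm : ∀ i, ‖⟪b i, z (b i)⟫_ℂ‖ ≤
          ‖z - G M‖ + ‖⟪b i, G M (b i)⟫_ℂ‖ := by
        intro i
        have h : ⟪b i, z (b i)⟫_ℂ =
            ⟪b i, (z - G M) (b i)⟫_ℂ + ⟪b i, G M (b i)⟫_ℂ := by
          rw [ContinuousLinearMap.sub_apply, inner_sub_right]; ring
        rw [h]
        refine (norm_add_le _ _).trans (add_le_add_left ?_ _)
        calc ‖⟪b i, (z - G M) (b i)⟫_ℂ‖ ≤ ‖(b i : H)‖ * ‖(z - G M) (b i)‖ :=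
              norm_inner_le_norm _ _
          _ = ‖(z - G M) (b i)‖ := by rw [hb1 i, one_mul]
          _ ≤ ‖z - G M‖ * ‖(b i : H)‖ := ContinuousLinearMap.le_opNorm _ _
          _ = ‖z - G M‖ := by rw [hb1 i, mul_one]
      calc ∑ i ∈ Finset.range N, ‖⟪b i, z (b i)⟫_ℂ‖
          ≤ ∑ i ∈ Finset.range N, (‖z - G M‖ + ‖⟪b i, G M (b i)⟫_ℂ‖) :=
            Finset.sum_le_sum fun i _ => hterm i
        _ = (N : ℝ) * ‖z - G M‖ + ∑ i ∈ Finset.range N, ‖⟪b i, G M (b i)⟫_ℂ‖ := by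
            rw [Finset.sum_add_distrib, Finset.sum_const, Finset.card_range, nsmul_eq_mul]
        _ ≤ (N : ℝ) * ‖z - G M‖ + (B0 + ∑ m ∈ Finset.range M, t m) :=
            add_le_add_right (hGM M N) _
        _ ≤ (N : ℝ) * ‖z - G M‖ + (B0 + Ct) :=
            add_le_add_right (add_le_add_right (hCt_part M) _) _
    have hnorm0 : Tendsto (fun M => ‖z - G M‖) atTop (𝓝 0) := by
      apply squeeze_zero (fun M => norm_nonneg _) hzG
      have hs0 : Tendsto (fun n => singVal z n) atTop (𝓝 0) := hs.tendsto_atTop_zero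
      have hpow : Tendsto (fun M : ℕ => 2 ^ M) atTop atTop :=
        tendsto_pow_atTop_atTop_of_one_lt one_lt_two
      have hgeo0 : Tendsto (fun M : ℕ => (4 : ℝ)⁻¹ ^ M) atTop (𝓝 0) :=
        tendsto_pow_atTop_nhds_zero_of_lt_one (by norm_num) (by norm_num)
      simpa using (hs0.comp hpow).add hgeo0
    have hlim : Tendsto (fun M => (N : ℝ) * ‖z - G M‖ + (B0 + Ct)) atTop
        (𝓝 (B0 + Ct)) := by
      have h := (hnorm0.const_mul (N : ℝ)).add (tendsto_const_nhds (x := B0 + Ct))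
      simpa using h
    exact ge_of_tendsto' hlim key
  have h1 : Summable (fun i => ‖⟪b i, z (b i)⟫_ℂ‖) :=
    summable_of_sum_range_le (fun i => norm_nonneg _) hbnd
  exact h1.of_norm

lemma proj_exists (b : HilbertBasis ℕ ℂ H) (n : ℕ) :
    ∃ P : H →L[ℂ] H,
      (∀ v, ‖P v‖ ≤ ‖v‖) ∧
      (∀ v, ∀ i, i < n → ⟪b i, P v⟫_ℂ = ⟪b i, v⟫_ℂ) ∧
      (∀ v, ∀ i, n ≤ i → ⟪b i, P v⟫_ℂ = 0) ∧
      (∃ U : Submodule ℂ H, FiniteDimensional ℂ U ∧ ∀ v, P v ∈ U) := by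
  classical
  set Kn : Submodule ℂ H := Submodule.span ℂ (Set.range (fun j : Fin n => b j)) with hKn
  haveI : FiniteDimensional ℂ Kn := FiniteDimensional.span_of_finite ℂ (Set.finite_range _)
  haveI : CompleteSpace Kn := FiniteDimensional.complete ℂ _
  refine ⟨Kn.subtypeL ∘L Kn.orthogonalProjectionOnto, ?_, ?_, ?_, ⟨Kn, inferInstance, ?_⟩⟩
  · intro v
    have h1 : ‖(Kn.orthogonalProjectionOnto) v‖ ≤ ‖Kn.orthogonalProjectionOnto‖ * ‖v‖ :=
      ContinuousLinearMap.le_opNorm _ _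
    have h2 : ‖Kn.orthogonalProjectionOnto‖ ≤ 1 := Kn.orthogonalProjectionOnto_norm_le
    have h3 : ‖(Kn.subtypeL ∘L Kn.orthogonalProjectionOnto) v‖ =
        ‖(Kn.orthogonalProjectionOnto) v‖ := rfl
    rw [h3]
    nlinarith [norm_nonneg v, norm_nonneg ((Kn.orthogonalProjectionOnto) v)]
  · intro v i hi
    have hmem : (b i : H) ∈ Kn := Submodule.subset_span ⟨⟨i, hi⟩, rfl⟩
    have h0 : ⟪v - ((Kn.orthogonalProjectionOnto v : Kn) : H), b i⟫_ℂ = 0 :=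
      Submodule.starProjection_inner_eq_zero v (b i) hmem
    have h1 : ⟪b i, v - ((Kn.orthogonalProjectionOnto v : Kn) : H)⟫_ℂ = 0 := by
      rw [← inner_conj_symm, h0]
      simp
    have h2 : ⟪b i, v⟫_ℂ - ⟪b i, ((Kn.orthogonalProjectionOnto v : Kn) : H)⟫_ℂ = 0 := by
      rw [← inner_sub_right]; exact h1
    have h3 : ⟪b i, (Kn.subtypeL ∘L Kn.orthogonalProjectionOnto) v⟫_ℂ =
        ⟪b i, ((Kn.orthogonalProjectionOnto v : Kn) : H)⟫_ℂ := rfl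
    rw [h3]
    have := sub_eq_zero.1 h2
    exact this.symm
  · intro v i hi
    have hker : Kn ≤ LinearMap.ker ((innerSL ℂ (b i)) : H →ₗ[ℂ] ℂ) := by
      rw [hKn, Submodule.span_le]
      rintro w ⟨j, rfl⟩
      simp only [SetLike.mem_coe, LinearMap.mem_ker]
      have hne : i ≠ (j : ℕ) := by omega
      exact b.orthonormal.2 hne
    have hmem : (Kn.subtypeL ∘L Kn.orthogonalProjectionOnto) v ∈ Kn :=
      ((Kn.orthogonalProjectionOnto) v).2
    have h := hker hmem
    simpa using h
  · intro v
    exact ((Kn.orthogonalProjectionOnto) v).2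

end

end FRWD

/-- For every `x ∈ C_E` there is a sequence of finite rank operators
converging to `x` in the weak topology `σ(C_E, C_E^×)`. -/
theorem finite_rank_weakly_dense
    {H : Type*} [NormedAddCommGroup H] [InnerProductSpace ℂ H] [CompleteSpace H]
    [TopologicalSpace.SeparableSpace H] (hinf : ¬ FiniteDimensional ℂ H)
    (S : BanachSymmSeqSpace) (hc0 : S.SubsetC0)
    (b : HilbertBasis ℕ ℂ H) :
    ∀ (x : H →L[ℂ] H) (hx : x ∈ CE (H := H) S),
      ∃ xseq : ℕ → {z : H →L[ℂ] H // z ∈ CE (H := H) S},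
        (∀ n, FiniteDimensional ℂ (LinearMap.range ((xseq n).1 : H →ₗ[ℂ] H))) ∧
        Filter.Tendsto xseq Filter.atTop
          (@nhds _ (sigmaTop S b)
            (⟨x, hx⟩ : {z : H →L[ℂ] H // z ∈ CE (H := H) S})) := by
  intro x hx
  classical
  obtain ⟨hxc, hxs⟩ := hx
  -- projections onto the span of the first n basis vectors
  choose P hP1 hP2 hP3 hP4 using fun n => FRWD.proj_exists b n
  -- membership of the truncations in C_E
  have hsv : ∀ n k, singVal (P n ∘L x) k ≤ singVal x k :=
    fun n k => FRWD.singVal_comp_le (P n) (hP1 n) x k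
  have hmem : ∀ n, (P n ∘L x) ∈ CE (H := H) S := by
    intro n
    constructor
    · have h := (hxc.clm_comp (P n))
      have hc : ⇑(P n ∘L x) = ⇑(P n) ∘ ⇑x := by rfl
      rw [hc]; exact h
    · refine (S.symmetric (fun k => singVal (P n ∘L x) k) (fun k => singVal x k) hxs
        ⟨‖P n ∘L x‖, fun k => ?_⟩ fun k => ?_).1
      · rw [abs_of_nonneg (FRWD.singVal_nonneg _ k)]
        exact FRWD.singVal_le_norm _ k
      · refine FRWD.decRearrange_le (fun m => ?_) (C := ‖x‖) (fun m => ?_) k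
        · rw [abs_of_nonneg (FRWD.singVal_nonneg _ m),
            abs_of_nonneg (FRWD.singVal_nonneg _ m)]
          exact hsv n m
        · rw [abs_of_nonneg (FRWD.singVal_nonneg _ m)]
          exact FRWD.singVal_le_norm _ m
  have hfinrange : ∀ n, FiniteDimensional ℂ (LinearMap.range ((P n ∘L x) : H →ₗ[ℂ] H)) := by
    intro n
    obtain ⟨U, hU1, hU2⟩ := hP4 n
    haveI := hU1
    have hle : LinearMap.range ((P n ∘L x) : H →ₗ[ℂ] H) ≤ U := by
      rintro v ⟨u, rfl⟩
      exact hU2 (x u)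
    exact Submodule.finiteDimensional_of_le hle
  refine ⟨fun n => ⟨P n ∘L x, hmem n⟩, fun n => hfinrange n, ?_⟩
  have htop : @nhds _ (sigmaTop S b) (⟨x, hxc, hxs⟩ : {z : H →L[ℂ] H // z ∈ CE (H := H) S}) =
      ⨅ y : {y : H →L[ℂ] H // y ∈ KDual (H := H) S},
        Filter.comap (fun w : {z : H →L[ℂ] H // z ∈ CE (H := H) S} => traceB b (w.1 * y.1))
          (nhds (traceB b (x * y.1))) := by
    rw [sigmaTop, _root_.nhds_iInf]
    exact iInf_congr fun y => nhds_induced _ _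
  rw [htop, Filter.tendsto_iInf]
  intro y
  rw [Filter.tendsto_comap_iff]
  have hz : IsTraceClass (x * y.1) := y.2 x ⟨hxc, hxs⟩
  have hd : Summable (fun i => ⟪b i, (x * y.1) (b i)⟫_ℂ) :=
    FRWD.summable_diag b (x * y.1) hz.2
  have heq : ∀ n, traceB b ((P n ∘L x) * y.1) =
      ∑ i ∈ Finset.range n, ⟪b i, (x * y.1) (b i)⟫_ℂ := by
    intro n
    have hco : (P n ∘L x) * y.1 = P n ∘L (x * y.1) := mul_assoc (P n) x y.1
    rw [hco, traceB]
    have hval : ∀ i, ⟪b i, (P n ∘L (x * y.1)) (b i)⟫_ℂ =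
        if i < n then ⟪b i, (x * y.1) (b i)⟫_ℂ else 0 := by
      intro i
      by_cases hi : i < n
      · rw [if_pos hi]
        exact hP2 n ((x * y.1) (b i)) i hi
      · rw [if_neg hi]
        exact hP3 n ((x * y.1) (b i)) i (not_lt.1 hi)
    calc ∑' i, ⟪b i, (P n ∘L (x * y.1)) (b i)⟫_ℂ
        = ∑' i, (if i < n then ⟪b i, (x * y.1) (b i)⟫_ℂ else 0) := tsum_congr hval
      _ = ∑ i ∈ Finset.range n, (if i < n then ⟪b i, (x * y.1) (b i)⟫_ℂ else 0) := by
          refine tsum_eq_sum fun i hi => ?_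
          rw [if_neg (by simpa using hi)]
      _ = ∑ i ∈ Finset.range n, ⟪b i, (x * y.1) (b i)⟫_ℂ :=
          Finset.sum_congr rfl fun i hi => if_pos (Finset.mem_range.1 hi)
  have hlim : Filter.Tendsto (fun n => ∑ i ∈ Finset.range n, ⟪b i, (x * y.1) (b i)⟫_ℂ)
      Filter.atTop (nhds (∑' i, ⟪b i, (x * y.1) (b i)⟫_ℂ)) :=
    hd.hasSum.tendsto_sum_nat
  have hgoal : traceB b (x * y.1) = ∑' i, ⟪b i, (x * y.1) (b i)⟫_ℂ := rfl
  rw [hgoal]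
  refine hlim.congr fun n => ?_
  exact (heq n).symm
end
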